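/- arXiv:2112.11813 — 5 statements merged into one kernel-verified Lean document; each statement's English description precedes it below -/
import Mathlib

section
/- For a sequence (x_n) in [0,1] and 0 ≤ β ≤ 1, the integral I_β(s,N) = ∫₀¹ F_β(t,s,N)² dt satisfies the identity I_β(s,N) = (1/s)∫₀ˢ R₂(β;σ,N) dσ · s + s/N^{1−β}; equivalently, ∫₀¹ F_β(t,s,N)² dt = s·N^{β−2} Σ_{m≠n≤N} {1 − ‖x_n−x_m‖·N^β/s}⁺ + s·N^{β−1}, where {x}⁺ = max(x,0). -/
open Finset Filter MeasureTheory
open scoped Classical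

/-- Distance to the nearest integer. -/
noncomputable def nd (x : ℝ) : ℝ := |x - round x|

/-- Signed distance to the nearest integer: `{x}` if `{x} ≤ 1/2`, else `{x} - 1`. -/
noncomputable def sd (x : ℝ) : ℝ :=
  if Int.fract x ≤ 1/2 then Int.fract x else Int.fract x - 1

/-- Number of pairs `m ≠ n ≤ N` with `‖x_m - x_n‖ ≤ r`. -/
noncomputable def pairCount (x : ℕ → ℝ) (N : ℕ) (r : ℝ) : ℕ :=
  ((Finset.Icc 1 N ×ˢ Finset.Icc 1 N).filter
    (fun p => p.1 ≠ p.2 ∧ nd (x p.1 - x p.2) ≤ r)).card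

/-- The pair correlation function with parameter `β`. -/
noncomputable def R2 (x : ℕ → ℝ) (β s : ℝ) (N : ℕ) : ℝ :=
  (pairCount x N (s / (N : ℝ) ^ β) : ℝ) / (N : ℝ) ^ (2 - β)

/-- `F_β(t,s,N) = N^{β-1} · #{n ≤ N : ‖x_n - t‖ ≤ s/(2N^β)}`. -/
noncomputable def Fb (x : ℕ → ℝ) (β t s : ℝ) (N : ℕ) : ℝ :=
  (((Finset.Icc 1 N).filter (fun n => nd (x n - t) ≤ s / (2 * (N : ℝ) ^ β))).card : ℝ)
    / (N : ℝ) ^ (1 - β)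

/-- Uniform distribution modulo 1 of a sequence in `[0,1]`. -/
def UnifDist (x : ℕ → ℝ) : Prop :=
  ∀ a b : ℝ, 0 ≤ a → a < b → b ≤ 1 →
    Tendsto (fun N : ℕ =>
      (((Finset.Icc 1 N).filter (fun i => x i ∈ Set.Icc a b)).card : ℝ) / N)
      atTop (nhds (b - a))

/-- Weak Poissonian pair correlations with parameter `γ` (for `γ = 0`, only scales
`s ≤ 1/2` are required). -/
def PPC (x : ℕ → ℝ) (γ : ℝ) : Prop :=
  ∀ s : ℝ, 0 < s → (γ = 0 → s ≤ 1/2) →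
    Tendsto (fun N => R2 x γ s N) atTop (nhds (2 * s))

lemma measurable_nd : Measurable nd := by
  have h1 : Measurable (fun x : ℝ => (⌊x + 1/2⌋ : ℤ)) := (measurable_id.add_const _).floor
  have h2 : Measurable ((↑· : ℤ → ℝ)) := measurable_from_top
  have h3 : Measurable (fun x : ℝ => (round x : ℝ)) := by
    simpa [round_eq, Function.comp_def] using h2.comp h1
  exact (measurable_id.sub h3).abs

lemma nd_intAdd (x : ℝ) (k : ℤ) : nd (x + k) = nd x := by
  unfold nd; rw [round_add_intCast]; push_cast; ring_nf

lemma nd_add_one (x : ℝ) : nd (x + 1) = nd x := by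
  simpa using nd_intAdd x 1

lemma nd_sub_one (x : ℝ) : nd (x - 1) = nd x := by
  rw [sub_eq_add_neg]; exact_mod_cast nd_intAdd x (-1)

lemma nd_eq_abs {x : ℝ} (h1 : -(1/2) ≤ x) (h2 : x ≤ 1/2) : nd x = |x| := by
  rcases eq_or_lt_of_le h2 with h | h
  · subst h; norm_num [nd, round_eq]
  · have : round x = 0 := by
      rw [round_eq, Int.floor_eq_zero_iff]
      constructor <;> simp <;> linarith
    simp [nd, this]

lemma sd_lb (x : ℝ) : -(1/2) < sd x := by
  unfold sd; split <;> [linarith [Int.fract_nonneg x]; linarith []]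

lemma sd_ub (x : ℝ) : sd x ≤ 1/2 := by
  unfold sd; split <;> [linarith; linarith [Int.fract_lt_one x]]

lemma sd_int_diff (x : ℝ) : ∃ k : ℤ, x = sd x + k := by
  unfold sd; split
  · exact ⟨⌊x⌋, by rw [Int.fract]; ring⟩
  · exact ⟨⌊x⌋ + 1, by rw [Int.fract]; push_cast; ring⟩

lemma nd_eq_abs_sd (x : ℝ) : nd x = |sd x| := by
  obtain ⟨k, hk⟩ := sd_int_diff x
  calc nd x = nd (sd x + k) := by rw [← hk]
  _ = nd (sd x) := nd_intAdd _ _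
  _ = |sd x| := nd_eq_abs (le_of_lt (sd_lb x)) (sd_ub x)

lemma overlap (a b r : ℝ) (hr0 : 0 < r) (hr4 : r ≤ 1/4) :
    (∫ t in (0:ℝ)..1,
      (if nd (a - t) ≤ r then (1:ℝ) else 0) * (if nd (b - t) ≤ r then (1:ℝ) else 0))
      = max (2*r - nd (a - b)) 0 := by
  set f : ℝ → ℝ := fun t =>
    (if nd (a - t) ≤ r then (1:ℝ) else 0) * (if nd (b - t) ≤ r then (1:ℝ) else 0) with hf
  have hper : Function.Periodic f 1 := by
    intro t
    have e1 : a - (t + 1) = (a - t) + ((-1 : ℤ) : ℝ) := by push_cast; ring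
    have e2 : b - (t + 1) = (b - t) + ((-1 : ℤ) : ℝ) := by push_cast; ring
    simp only [hf, e1, e2, nd_intAdd]
  have h1 : (∫ t in (0:ℝ)..1, f t) = ∫ t in (b - 1/2)..(b + 1/2), f t := by
    have := hper.intervalIntegral_add_eq 0 (b - 1/2)
    norm_num at this
    convert this using 2
    ring
  obtain ⟨k, hk⟩ := sd_int_diff (a - b)
  set c := sd (a - b) with hc
  have h3 : ∀ u, f (b - u) = (if nd (c + u) ≤ r then (1:ℝ) else 0) * (if nd u ≤ r then 1 else 0) := by
    intro u
    have e1 : a - (b - u) = (c + u) + (k : ℝ) := by rw [← add_right_comm, ← hk]; ring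
    have e2 : b - (b - u) = u := by ring
    simp only [hf, e1, e2, nd_intAdd]
  have h2 : (∫ t in (b - 1/2)..(b + 1/2), f t)
      = ∫ u in (-(1/2):ℝ)..(1/2), (if nd (c + u) ≤ r then (1:ℝ) else 0) * (if nd u ≤ r then 1 else 0) := by
    rw [show (∫ u in (-(1/2):ℝ)..(1/2), (if nd (c + u) ≤ r then (1:ℝ) else 0) * (if nd u ≤ r then 1 else 0))
        = ∫ u in (-(1/2):ℝ)..(1/2), f (b - u) from by simp only [h3]]
    rw [intervalIntegral.integral_comp_sub_left f b]
    norm_num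
  rw [h1, h2, intervalIntegral.integral_of_le (by norm_num : (-(1/2):ℝ) ≤ 1/2)]
  have hclb : -(1/2) < c := sd_lb _
  have hcub : c ≤ 1/2 := sd_ub _
  set S : Set ℝ := Set.Icc (max (-r) (-c - r)) (min r (r - c)) with hS
  have hpt : ∀ u ∈ Set.Ioc (-(1/2):ℝ) (1/2), u ≠ 1/4 →
      (if nd (c + u) ≤ r then (1:ℝ) else 0) * (if nd u ≤ r then 1 else 0)
        = S.indicator (fun _ => (1:ℝ)) u := by
    rintro u ⟨hu1, hu2⟩ hne
    have hnd_u : nd u = |u| := nd_eq_abs (le_of_lt hu1) hu2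
    have hiff : (nd (c + u) ≤ r ∧ nd u ≤ r) ↔ u ∈ S := by
      rw [hS, Set.mem_Icc, max_le_iff, le_min_iff, hnd_u]
      constructor
      · rintro ⟨hcu, hu⟩
        have hu' : -r ≤ u ∧ u ≤ r := abs_le.mp hu
        obtain ⟨hul, hur⟩ := hu'
        have hcu' : |c + u| ≤ r := by
          by_contra hgt
          push_neg at hgt
          rcases le_or_gt (c + u) 0 with hle | hlt
          · have h5 : c + u < -r := by
              rcases abs_cases (c+u) with ⟨h,_⟩|⟨h,_⟩ <;> linarith
            rcases lt_or_ge (c + u) (-(1/2)) with hlt2 | hle2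
            · have heq : nd (c + u) = c + u + 1 := by
                rw [← nd_add_one, nd_eq_abs (by linarith) (by linarith),
                  abs_of_nonneg (by linarith)]
              rw [heq] at hcu
              linarith
            · rw [nd_eq_abs hle2 (by linarith), abs_of_nonpos (by linarith)] at hcu
              linarith
          · have h5 : r < c + u := by
              rcases abs_cases (c+u) with ⟨h,_⟩|⟨h,_⟩ <;> linarith
            rcases le_or_gt (c + u) (1/2) with hle2 | hlt2
            · rw [nd_eq_abs (by linarith) hle2, abs_of_nonneg (by linarith)] at hcu
              linarith
            · have heq : nd (c + u) = 1 - (c + u) := by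
                rw [← nd_sub_one, nd_eq_abs (by linarith) (by linarith),
                  abs_of_nonpos (by linarith)]
                ring
              rw [heq] at hcu
              have hu14 : u = 1/4 := by nlinarith
              exact hne hu14
        rw [abs_le] at hcu'
        exact ⟨⟨by linarith, by linarith⟩, by linarith, by linarith⟩
      · rintro ⟨⟨h1', h2'⟩, h3', h4'⟩
        have hcu : |c + u| ≤ r := abs_le.mpr ⟨by linarith, by linarith⟩
        have : nd (c + u) = |c + u| :=
          nd_eq_abs (by rcases abs_le.mp hcu with ⟨h,_⟩; linarith)
            (by rcases abs_le.mp hcu with ⟨_,h⟩; linarith)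
        exact ⟨by rw [this]; exact hcu, abs_le.mpr ⟨by linarith, by linarith⟩⟩
    by_cases hcase : nd (c + u) ≤ r ∧ nd u ≤ r
    · rw [if_pos hcase.1, if_pos hcase.2, Set.indicator_of_mem (hiff.mp hcase)]
      norm_num
    · rw [Set.indicator_of_notMem (fun hmem => hcase (hiff.mpr hmem))]
      rcases not_and_or.mp hcase with h | h
      · rw [if_neg h, zero_mul]
      · rw [if_neg h, mul_zero]
  have hbad : ∀ᵐ u ∂(volume.restrict (Set.Ioc (-(1/2):ℝ) (1/2))), u ≠ (1/4:ℝ) := by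
    refine ae_restrict_of_ae ?_
    refine (ae_iff).mpr ?_
    simp only [not_ne_iff]
    have he : {u : ℝ | u = 1/4} = {(1/4:ℝ)} := by ext u; simp
    rw [he]
    exact measure_singleton _
  have hcong : ∀ᵐ u ∂(volume.restrict (Set.Ioc (-(1/2):ℝ) (1/2))),
      (if nd (c + u) ≤ r then (1:ℝ) else 0) * (if nd u ≤ r then 1 else 0)
        = S.indicator (fun _ => (1:ℝ)) u := by
    filter_upwards [ae_restrict_mem measurableSet_Ioc, hbad] with u hu hne
    exact hpt u hu hne
  rw [integral_congr_ae hcong, setIntegral_indicator measurableSet_Icc]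
  have hsub : S ⊆ Set.Ioc (-(1/2):ℝ) (1/2) := by
    rintro u ⟨hl, hr'⟩
    constructor
    · have : -r ≤ u := le_trans (le_max_left _ _) hl
      linarith
    · have : u ≤ r := le_trans hr' (min_le_left _ _)
      linarith
  rw [Set.inter_eq_right.mpr hsub, setIntegral_const, smul_eq_mul, mul_one, measureReal_def, Real.volume_Icc]
  rw [ENNReal.toReal_ofReal']
  rw [nd_eq_abs_sd, ← hc]
  congr 1
  rcases le_total c 0 with h | h
  · rw [abs_of_nonpos h, min_eq_left (by linarith), max_eq_right (by linarith)]
    ring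
  · rw [abs_of_nonneg h, min_eq_right (by linarith), max_eq_left (by linarith)]
    ring

theorem stmt1 (x : ℕ → ℝ) (hx : ∀ n, x n ∈ Set.Icc (0:ℝ) 1)
    (β : ℝ) (hβ0 : 0 ≤ β) (hβ1 : β ≤ 1) (s : ℝ) (hs : 0 < s) (N : ℕ) (hN : 1 ≤ N)
    (hsmall : 2 * s ≤ (N : ℝ) ^ β) :
    ∫ t in (0:ℝ)..1, (Fb x β t s N) ^ 2
      = s * (N : ℝ) ^ (β - 2) *
          ∑ p ∈ (Finset.Icc 1 N ×ˢ Finset.Icc 1 N).filter (fun p => p.1 ≠ p.2),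
            max (1 - nd (x p.1 - x p.2) * (N : ℝ) ^ β / s) 0
        + s * (N : ℝ) ^ (β - 1) := by
  have hNpos : (0:ℝ) < (N:ℝ) := by exact_mod_cast Nat.lt_of_lt_of_le Nat.zero_lt_one hN
  have hA : (0:ℝ) < (N:ℝ) ^ β := Real.rpow_pos_of_pos hNpos β
  set A : ℝ := (N:ℝ) ^ β with hAdef
  set r : ℝ := s / (2 * A) with hrdef
  have hr0 : 0 < r := by rw [hrdef]; positivity
  have hr4 : r ≤ 1/4 := by
    rw [hrdef, div_le_iff₀ (by positivity)]
    nlinarith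
  set G : ℕ → ℝ → ℝ := fun n t => if nd (x n - t) ≤ r then (1:ℝ) else 0 with hG
  set P := Finset.Icc 1 N ×ˢ Finset.Icc 1 N with hP
  have hFb : ∀ t, (Fb x β t s N)^2
      = (∑ p ∈ P, G p.1 t * G p.2 t) / ((N:ℝ) ^ (1 - β))^2 := by
    intro t
    rw [Fb, div_pow]
    congr 1
    have hcard : ((Finset.filter (fun n => nd (x n - t) ≤ s / (2 * (N:ℝ) ^ β)) (Finset.Icc 1 N)).card : ℝ)
        = ∑ n ∈ Finset.Icc 1 N, G n t := by
      rw [Finset.card_filter]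
      push_cast
      simp [hG]
      rw [← hAdef, ← hrdef]
    rw [hcard, sq, Finset.sum_mul_sum, hP, Finset.sum_product]
  have hmeas : ∀ n, Measurable (G n) := by
    intro n
    apply Measurable.ite _ measurable_const measurable_const
    exact measurableSet_le (measurable_nd.comp (measurable_const.sub measurable_id)) measurable_const
  have hInt : ∀ p ∈ P, IntervalIntegrable (fun t => G p.1 t * G p.2 t) volume 0 1 := by
    intro p _
    rw [intervalIntegrable_iff]
    apply Measure.integrableOn_of_bounded (M := 1)
    · rw [Set.uIoc_of_le (by norm_num : (0:ℝ) ≤ 1), Real.volume_Ioc]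
      exact ENNReal.ofReal_ne_top
    · exact ((hmeas p.1).mul (hmeas p.2)).aestronglyMeasurable
    · filter_upwards with t
      rw [hG]
      simp only
      split_ifs <;> norm_num
  have step1 : (∫ t in (0:ℝ)..1, (Fb x β t s N) ^ 2)
      = (∑ p ∈ P, max (2*r - nd (x p.1 - x p.2)) 0) / ((N:ℝ) ^ (1 - β))^2 := by
    rw [show (fun t => (Fb x β t s N)^2) = fun t => (∑ p ∈ P, G p.1 t * G p.2 t) / ((N:ℝ) ^ (1 - β))^2
        from funext hFb]
    rw [intervalIntegral.integral_div, intervalIntegral.integral_finset_sum hInt]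
    congr 1
    exact Finset.sum_congr rfl fun p _ => overlap (x p.1) (x p.2) r hr0 hr4
  rw [step1]
  rw [← Finset.sum_filter_add_sum_filter_not P (fun p => p.1 ≠ p.2)
    (fun p => max (2*r - nd (x p.1 - x p.2)) 0)]
  have hdiag : ∑ p ∈ P.filter (fun p => ¬ p.1 ≠ p.2), max (2*r - nd (x p.1 - x p.2)) 0
      = (N:ℝ) * (2*r) := by
    have hterm : ∀ p ∈ P.filter (fun p => ¬ p.1 ≠ p.2),
        max (2*r - nd (x p.1 - x p.2)) 0 = 2*r := by
      intro p hp
      rw [Finset.mem_filter] at hp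
      have : p.1 = p.2 := not_ne_iff.mp hp.2
      rw [this, sub_self]
      have : nd 0 = 0 := by simp [nd]
      rw [this, sub_zero, max_eq_left (by linarith)]
    rw [Finset.sum_congr rfl hterm, Finset.sum_const, nsmul_eq_mul]
    congr 1
    have : P.filter (fun p => ¬ p.1 ≠ p.2) = (Finset.Icc 1 N).diag := by
      ext p
      simp only [Finset.mem_filter, Finset.mem_diag, hP, Finset.mem_product, not_ne_iff]
      constructor
      · rintro ⟨⟨h1, h2⟩, h3⟩; exact ⟨h1, h3⟩
      · rintro ⟨h1, h2⟩; exact ⟨⟨h1, h2 ▸ h1⟩, h2⟩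
    rw [this, Finset.diag_card, Nat.card_Icc]
    simp
  rw [hdiag, add_div]
  have e2 : (N:ℝ)^((1:ℝ)-β) = (N:ℝ) / A := by
    rw [Real.rpow_sub hNpos, Real.rpow_one, hAdef]
  have hNne : (N:ℝ) ≠ 0 := ne_of_gt hNpos
  have hAne : A ≠ 0 := ne_of_gt hA
  have hsne : s ≠ 0 := ne_of_gt hs
  have e1 : (N:ℝ)^(β-(2:ℝ)) = A / (N:ℝ)^(2:ℕ) := by
    rw [show β - (2:ℝ) = β - ((2:ℕ):ℝ) by norm_num, Real.rpow_sub hNpos, Real.rpow_natCast, hAdef]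
  have e3 : (N:ℝ)^(β-(1:ℝ)) = A / (N:ℝ) := by
    rw [Real.rpow_sub hNpos, Real.rpow_one, hAdef]
  congr 1
  · rw [Finset.mul_sum, Finset.sum_div]
    apply Finset.sum_congr rfl
    intro p hp
    rw [← max_div_div_right (by positivity : (0:ℝ) ≤ ((N:ℝ) ^ ((1:ℝ)-β))^2), zero_div,
      mul_max_of_nonneg _ _ (by positivity : (0:ℝ) ≤ s * (N:ℝ)^(β-(2:ℝ))), mul_zero]
    congr 1
    rw [e1, e2, hrdef]
    field_simp
  · rw [e2, e3, hrdef]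
    field_simp
end

section
/- Let 0 ≤ β ≤ 1 and s₀ > 0. A sequence (x_n) in [0,1] satisfies lim_{N→∞} R₂(β;s,N) = 2s for all s < s₀ if and only if lim_{N→∞} (1/s)∫₀ˢ R₂(β;σ,N) dσ = s for all s < s₀. -/
open Finset Filter MeasureTheory
open scoped Classical

lemma R2_mono (x : ℕ → ℝ) (β : ℝ) (N : ℕ) : Monotone (fun σ => R2 x β σ N) := by
  intro a b hab
  have h1 : a / (N:ℝ)^β ≤ b / (N:ℝ)^β := by
    rw [div_eq_mul_inv, div_eq_mul_inv]
    exact mul_le_mul_of_nonneg_right hab (by positivity)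
  have h2 : pairCount x N (a/(N:ℝ)^β) ≤ pairCount x N (b/(N:ℝ)^β) := by
    apply Finset.card_le_card
    exact Finset.monotone_filter_right _ (fun p _ h => ⟨h.1, h.2.trans h1⟩)
  simp only [R2, div_eq_mul_inv]
  exact mul_le_mul_of_nonneg_right (Nat.cast_le.2 h2) (by positivity)

lemma R2_nonneg (x : ℕ → ℝ) (β σ : ℝ) (N : ℕ) : 0 ≤ R2 x β σ N := by
  unfold R2; positivity

lemma R2_intble (x : ℕ → ℝ) (β : ℝ) (N : ℕ) (a b : ℝ) :
    IntervalIntegrable (fun σ => R2 x β σ N) volume a b :=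
  ((R2_mono x β N).monotoneOn _).intervalIntegrable

lemma gauss : ∀ m : ℕ, ∑ i ∈ Finset.range m, (i:ℝ) = m*(m-1)/2 := by
  intro m; induction m with
  | zero => simp
  | succ n ih => rw [Finset.sum_range_succ, ih]; push_cast; ring

lemma R2_integral_tendsto (x : ℕ → ℝ) (β s₀ : ℝ)
    (h : ∀ σ : ℝ, 0 < σ → σ < s₀ →
      Tendsto (fun N => R2 x β σ N) atTop (nhds (2 * σ)))
    (s : ℝ) (hs : 0 < s) (hss : s < s₀) :
    Tendsto (fun N : ℕ => ∫ σ in (0:ℝ)..s, R2 x β σ N) atTop (nhds (s^2)) := by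
  rw [Metric.tendsto_atTop]
  intro ε hε
  obtain ⟨k, hk1, hkε⟩ : ∃ k : ℕ, 1 ≤ k ∧ s^2 / k < ε := by
    refine ⟨⌈s^2/ε⌉₊ + 1, le_add_self, ?_⟩
    have h1 : s^2/ε < ((⌈s^2/ε⌉₊ + 1 : ℕ):ℝ) := by
      push_cast
      exact (Nat.le_ceil _).trans_lt (by linarith)
    have h2 : (0:ℝ) < ((⌈s^2/ε⌉₊ + 1 : ℕ):ℝ) := by positivity
    rw [div_lt_iff₀ h2]
    calc s^2 = (s^2/ε) * ε := by field_simp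
    _ < ((⌈s^2/ε⌉₊ + 1 : ℕ):ℝ) * ε := mul_lt_mul_of_pos_right h1 hε
    _ = ε * ((⌈s^2/ε⌉₊ + 1 : ℕ):ℝ) := by ring
  have hk0 : (0:ℝ) < k := by exact_mod_cast hk1
  have hkne : (k:ℝ) ≠ 0 := ne_of_gt hk0
  set σ : ℕ → ℝ := fun i => (i:ℝ) * s / k with hσdef
  have hσmono : Monotone σ := by
    intro i j hij
    simp only [hσdef]
    rw [div_eq_mul_inv, div_eq_mul_inv]
    have : (i:ℝ) ≤ j := by exact_mod_cast hij
    apply mul_le_mul_of_nonneg_right (mul_le_mul_of_nonneg_right this hs.le) (by positivity)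
  have hσ0 : σ 0 = 0 := by simp [hσdef]
  have hσk : σ k = s := by simp only [hσdef]; field_simp
  have hσle : ∀ i, i ≤ k → σ i ≤ s := fun i hi => hσk ▸ hσmono hi
  have hσpos : ∀ i, 1 ≤ i → 0 < σ i := by
    intro i hi
    have : (0:ℝ) < i := by exact_mod_cast hi
    simp only [hσdef]; positivity
  have hstep : ∀ i : ℕ, σ (i+1) - σ i = s / k := by
    intro i; simp only [hσdef]; push_cast; ring
  -- Upper sum
  have hU : Tendsto (fun N => ∑ i ∈ Finset.range k, (s/k) * R2 x β (σ (i+1)) N)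
      atTop (nhds (∑ i ∈ Finset.range k, (s/k) * (2 * σ (i+1)))) := by
    apply tendsto_finset_sum
    intro i hi
    have hik : i + 1 ≤ k := Finset.mem_range.1 hi
    exact (h (σ (i+1)) (hσpos _ le_add_self) ((hσle _ hik).trans_lt hss)).const_mul _
  have hUval : ∑ i ∈ Finset.range k, (s/k) * (2 * σ (i+1)) = s^2 + s^2/k := by
    have : ∀ i ∈ Finset.range k, (s/k) * (2 * σ (i+1))
        = (2*s^2/k^2) * (i:ℝ) + 2*s^2/k^2 := by
      intro i _; simp only [hσdef]; push_cast; field_simp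
    rw [Finset.sum_congr rfl this, Finset.sum_add_distrib, ← Finset.mul_sum, gauss,
      Finset.sum_const, Finset.card_range, nsmul_eq_mul]
    have hk1' : (1:ℝ) ≤ k := by exact_mod_cast hk1
    field_simp
    ring
  -- Lower sum
  have hS : Tendsto (fun N => ∑ i ∈ Finset.range k,
      (s/k) * (if i = 0 then 0 else R2 x β (σ i) N))
      atTop (nhds (∑ i ∈ Finset.range k, (s/k) * (2 * σ i))) := by
    apply tendsto_finset_sum
    intro i hi
    rcases Nat.eq_zero_or_pos i with rfl | hi1
    · simp only [hσ0, mul_zero, if_pos]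
      simpa using tendsto_const_nhds
    · simp only [Nat.pos_iff_ne_zero.1 hi1, if_false]
      exact (h (σ i) (hσpos _ hi1) ((hσle _ (Finset.mem_range.1 hi).le).trans_lt hss)).const_mul _
  have hSval : ∑ i ∈ Finset.range k, (s/k) * (2 * σ i) = s^2 - s^2/k := by
    have : ∀ i ∈ Finset.range k, (s/k) * (2 * σ i) = (2*s^2/k^2) * (i:ℝ) := by
      intro i _; simp only [hσdef]; field_simp
    rw [Finset.sum_congr rfl this, ← Finset.mul_sum, gauss]
    field_simp
  rw [hUval] at hU
  rw [hSval] at hS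
  -- bounds on the integral
  have hUb : ∀ N : ℕ, (∫ t in (0:ℝ)..s, R2 x β t N)
      ≤ ∑ i ∈ Finset.range k, (s/k) * R2 x β (σ (i+1)) N := by
    intro N
    have hsplit : ∑ i ∈ Finset.range k, (∫ t in σ i..σ (i+1), R2 x β t N)
        = ∫ t in (σ 0)..(σ k), R2 x β t N :=
      intervalIntegral.sum_integral_adjacent_intervals (fun i _ => R2_intble x β N _ _)
    rw [hσ0, hσk] at hsplit
    rw [← hsplit]
    apply Finset.sum_le_sum
    intro i _
    have hle : σ i ≤ σ (i+1) := hσmono (Nat.le_succ i)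
    calc (∫ t in σ i..σ (i+1), R2 x β t N)
        ≤ ∫ _t in σ i..σ (i+1), R2 x β (σ (i+1)) N := by
          apply intervalIntegral.integral_mono_on hle (R2_intble x β N _ _)
            intervalIntegrable_const
          intro t ht
          exact R2_mono x β N ht.2
      _ = (s/k) * R2 x β (σ (i+1)) N := by
          rw [intervalIntegral.integral_const, smul_eq_mul, hstep]
  have hSb : ∀ N : ℕ, ∑ i ∈ Finset.range k, (s/k) * (if i = 0 then 0 else R2 x β (σ i) N)
      ≤ ∫ t in (0:ℝ)..s, R2 x β t N := by
    intro N
    have hsplit : ∑ i ∈ Finset.range k, (∫ t in σ i..σ (i+1), R2 x β t N)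
        = ∫ t in (σ 0)..(σ k), R2 x β t N :=
      intervalIntegral.sum_integral_adjacent_intervals (fun i _ => R2_intble x β N _ _)
    rw [hσ0, hσk] at hsplit
    rw [← hsplit]
    apply Finset.sum_le_sum
    intro i _
    have hle : σ i ≤ σ (i+1) := hσmono (Nat.le_succ i)
    rcases Nat.eq_zero_or_pos i with rfl | hi1
    · simp only [if_pos, mul_zero]
      exact intervalIntegral.integral_nonneg hle (fun t _ => R2_nonneg x β t N)
    · simp only [Nat.pos_iff_ne_zero.1 hi1, if_false]
      calc (s/k) * R2 x β (σ i) N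
          = ∫ _t in σ i..σ (i+1), R2 x β (σ i) N := by
            rw [intervalIntegral.integral_const, smul_eq_mul, hstep]
        _ ≤ ∫ t in σ i..σ (i+1), R2 x β t N := by
            apply intervalIntegral.integral_mono_on hle intervalIntegrable_const
              (R2_intble x β N _ _)
            intro t ht
            exact R2_mono x β N ht.1
  -- combine
  have hεk : 0 < ε - s^2/k := by linarith
  obtain ⟨N₁, hN₁⟩ := (Metric.tendsto_atTop.1 hU) (ε - s^2/k) hεk
  obtain ⟨N₂, hN₂⟩ := (Metric.tendsto_atTop.1 hS) (ε - s^2/k) hεk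
  refine ⟨max N₁ N₂, fun N hN => ?_⟩
  have h1 := hN₁ N (le_of_max_le_left hN)
  have h2 := hN₂ N (le_of_max_le_right hN)
  rw [Real.dist_eq, abs_lt] at h1 h2 ⊢
  have hb1 := hUb N
  have hb2 := hSb N
  have hsk : 0 ≤ s^2/k := by positivity
  constructor <;> nlinarith [hb1, hb2, h1.1, h1.2, h2.1, h2.2]

lemma R2_pointwise (x : ℕ → ℝ) (β s₀ : ℝ)
    (h : ∀ σ : ℝ, 0 < σ → σ < s₀ →
      Tendsto (fun N : ℕ => ∫ t in (0:ℝ)..σ, R2 x β t N) atTop (nhds (σ^2)))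
    (s : ℝ) (hs : 0 < s) (hss : s < s₀) :
    Tendsto (fun N => R2 x β s N) atTop (nhds (2 * s)) := by
  rw [Metric.tendsto_atTop]
  intro ε hε
  set δ : ℝ := min (ε/4) (min ((s₀ - s)/2) (s/2)) with hδdef
  have hδpos : 0 < δ := by
    apply lt_min (by linarith) (lt_min (by linarith) (by linarith))
  have hδε : δ ≤ ε/4 := min_le_left _ _
  have hδ1 : s + δ < s₀ := by
    have h2 : δ ≤ (s₀ - s)/2 := (min_le_right _ _).trans (min_le_left _ _)
    linarith
  have hδ2 : δ ≤ s/2 := (min_le_right _ _).trans (min_le_right _ _)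
  have h1 := h s hs hss
  have h2 := h (s+δ) (by linarith) hδ1
  have h3 := h (s-δ) (by linarith) (by linarith)
  have hup := h2.sub h1
  have hdn := h1.sub h3
  obtain ⟨N₁, hN₁⟩ := (Metric.tendsto_atTop.1 hup) (δ*ε/4) (by positivity)
  obtain ⟨N₂, hN₂⟩ := (Metric.tendsto_atTop.1 hdn) (δ*ε/4) (by positivity)
  refine ⟨max N₁ N₂, fun N hN => ?_⟩
  have e1 := hN₁ N (le_of_max_le_left hN)
  have e2 := hN₂ N (le_of_max_le_right hN)
  rw [Real.dist_eq, abs_lt] at e1 e2 ⊢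
  -- integral bounds
  have hb1 : δ * R2 x β s N ≤ (∫ t in (0:ℝ)..(s+δ), R2 x β t N) - ∫ t in (0:ℝ)..s, R2 x β t N := by
    have hadd : (∫ t in (0:ℝ)..s, R2 x β t N) + (∫ t in s..(s+δ), R2 x β t N)
        = ∫ t in (0:ℝ)..(s+δ), R2 x β t N :=
      intervalIntegral.integral_add_adjacent_intervals (R2_intble x β N _ _) (R2_intble x β N _ _)
    have hmono : (∫ _t in s..(s+δ), R2 x β s N) ≤ ∫ t in s..(s+δ), R2 x β t N := by
      apply intervalIntegral.integral_mono_on (by linarith) intervalIntegrable_const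
        (R2_intble x β N _ _)
      intro t ht
      exact R2_mono x β N ht.1
    rw [intervalIntegral.integral_const, smul_eq_mul] at hmono
    have : s + δ - s = δ := by ring
    rw [this] at hmono
    linarith
  have hb2 : (∫ t in (0:ℝ)..s, R2 x β t N) - (∫ t in (0:ℝ)..(s-δ), R2 x β t N)
      ≤ δ * R2 x β s N := by
    have hadd : (∫ t in (0:ℝ)..(s-δ), R2 x β t N) + (∫ t in (s-δ)..s, R2 x β t N)
        = ∫ t in (0:ℝ)..s, R2 x β t N :=
      intervalIntegral.integral_add_adjacent_intervals (R2_intble x β N _ _) (R2_intble x β N _ _)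
    have hmono : (∫ t in (s-δ)..s, R2 x β t N) ≤ ∫ _t in (s-δ)..s, R2 x β s N := by
      apply intervalIntegral.integral_mono_on (by linarith) (R2_intble x β N _ _)
        intervalIntegrable_const
      intro t ht
      exact R2_mono x β N ht.2
    rw [intervalIntegral.integral_const, smul_eq_mul] at hmono
    have : s - (s - δ) = δ := by ring
    rw [this] at hmono
    linarith
  have key1 : δ * R2 x β s N < (s+δ)^2 - s^2 + δ*ε/4 := by nlinarith [e1.2]
  have key2 : s^2 - (s-δ)^2 - δ*ε/4 < δ * R2 x β s N := by nlinarith [e2.1]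
  have hR : R2 x β s N < 2*s + δ + ε/4 := by
    have h' : δ * R2 x β s N < δ * (2*s + δ + ε/4) := by nlinarith
    exact lt_of_mul_lt_mul_left (by linarith [h']) hδpos.le
  have hR2 : 2*s - δ - ε/4 < R2 x β s N := by
    have h' : δ * (2*s - δ - ε/4) < δ * R2 x β s N := by nlinarith
    exact lt_of_mul_lt_mul_left (by linarith [h']) hδpos.le
  constructor <;> nlinarith

theorem stmt2 (x : ℕ → ℝ) (hx : ∀ n, x n ∈ Set.Icc (0:ℝ) 1)
    (β : ℝ) (hβ0 : 0 ≤ β) (hβ1 : β ≤ 1) (s₀ : ℝ) (hs₀ : 0 < s₀) :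
    (∀ s : ℝ, 0 < s → s < s₀ →
        Tendsto (fun N => R2 x β s N) atTop (nhds (2 * s)))
    ↔ (∀ s : ℝ, 0 < s → s < s₀ →
        Tendsto (fun N : ℕ => (1/s) * ∫ σ in (0:ℝ)..s, R2 x β σ N) atTop (nhds s)) := by
  constructor
  · intro h s hs hss
    have ht := (R2_integral_tendsto x β s₀ h s hs hss).const_mul (1/s)
    have : (1/s) * s^2 = s := by field_simp
    rwa [this] at ht
  · intro h s hs hss
    apply R2_pointwise x β s₀ _ s hs hss
    intro σ hσ hσs
    have ht := (h σ hσ hσs).const_mul σ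
    have heq : (fun N : ℕ => σ * ((1/σ) * ∫ t in (0:ℝ)..σ, R2 x β t N))
        = fun N : ℕ => ∫ t in (0:ℝ)..σ, R2 x β t N := by
      funext N
      field_simp
    rw [heq] at ht
    have : σ * σ = σ^2 := by ring
    rwa [this] at ht
end

section
/- If a sequence (x_n) in [0,1] is uniformly distributed modulo 1, then it has Poissonian 0-pair correlations, i.e. lim_{N→∞} N^{−2} · #{m ≠ n ≤ N : ‖x_m − x_n‖ ≤ s} = 2s for all 0 < s ≤ 1/2. -/
open Finset Filter MeasureTheory
open scoped Classical

def circD (K j j' : ℕ) : ℕ := min (Nat.dist j j') (K - Nat.dist j j')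

noncomputable def ballK (K R j : ℕ) : Finset ℕ :=
  (Finset.range K).filter (fun j' => circD K j j' ≤ R)

noncomputable def PK (K R : ℕ) : Finset (ℕ × ℕ) :=
  (Finset.range K).biUnion (fun j => (ballK K R j).image (Prod.mk j))

noncomputable def idxK (x : ℕ → ℝ) (K n : ℕ) : ℕ := min (⌊(K : ℝ) * x n⌋₊) (K - 1)

noncomputable def SK (x : ℕ → ℝ) (K j N : ℕ) : Finset ℕ :=
  (Finset.Icc 1 N).filter (fun n => idxK x K n = j)


lemma nd_le_abs (t : ℝ) : nd t ≤ |t| := by simpa [nd] using round_le t 0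

lemma nd_le_one_sub_abs {t : ℝ} (ht : |t| ≤ 1) : nd t ≤ 1 - |t| := by
  rcases le_total 0 t with h0 | h0
  · have h := round_le t 1
    rw [abs_of_nonneg h0] at *
    have : |t - ((1:ℤ):ℝ)| = 1 - t := by
      rw [abs_of_nonpos (by push_cast; linarith)]; push_cast; ring
    rw [this] at h; exact h
  · have h := round_le t (-1)
    rw [abs_of_nonpos h0] at *
    have : |t - ((-1:ℤ):ℝ)| = 1 - -t := by
      rw [abs_of_nonneg (by push_cast; linarith)]; push_cast; ring
    rw [this] at h; exact h

lemma min_le_nd {t : ℝ} (ht : |t| ≤ 1) : min |t| (1 - |t|) ≤ nd t := by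
  by_cases hr : round t = 0
  · rw [nd, hr]; simpa using min_le_left |t| (1 - |t|)
  · have h1 : (1:ℝ) ≤ |((round t : ℤ):ℝ)| := by
      have : (1:ℤ) ≤ |round t| := by rcases lt_or_gt_of_ne hr with h | h <;> [rw [abs_of_neg h]; rw [abs_of_pos h]] <;> omega
      exact_mod_cast this
    have : 1 - |t| ≤ |t - round t| := by
      have := abs_sub_abs_le_abs_sub ((round t : ℤ):ℝ) t
      have h2 : |((round t:ℤ):ℝ) - t| = |t - round t| := abs_sub_comm _ _
      linarith
    exact le_trans (min_le_right _ _) this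


lemma dist_lt_K {K j j' : ℕ} (hj : j < K) (hj' : j' < K) : Nat.dist j j' < K := by
  rcases le_total j j' with h | h
  · rw [Nat.dist_eq_sub_of_le h]; omega
  · rw [Nat.dist_comm, Nat.dist_eq_sub_of_le h]; omega

lemma mem_PK {K R : ℕ} {p : ℕ × ℕ} :
    p ∈ PK K R ↔ p.1 < K ∧ p.2 < K ∧ circD K p.1 p.2 ≤ R := by
  constructor
  · intro hp
    rcases Finset.mem_biUnion.mp hp with ⟨j, hj, hmem⟩
    rcases Finset.mem_image.mp hmem with ⟨j', hj', rfl⟩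
    rcases Finset.mem_filter.mp hj' with ⟨hj'r, hd⟩
    exact ⟨Finset.mem_range.mp hj, Finset.mem_range.mp hj'r, hd⟩
  · rintro ⟨h1, h2, h3⟩
    refine Finset.mem_biUnion.mpr ⟨p.1, Finset.mem_range.mpr h1, ?_⟩
    refine Finset.mem_image.mpr ⟨p.2, ?_, rfl⟩
    exact Finset.mem_filter.mpr ⟨Finset.mem_range.mpr h2, h3⟩

lemma phi_min {K j j' : ℕ} (hj : j < K) (hj' : j' < K) :
    min ((j' + (K - j)) % K) (K - (j' + (K - j)) % K) = circD K j j' := by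
  rcases le_or_gt j j' with hle | hlt
  · have h1 : j' + (K - j) = K + (j' - j) := by omega
    have h2 : (j' + (K - j)) % K = j' - j := by
      rw [h1, Nat.add_mod_left, Nat.mod_eq_of_lt (by omega)]
    rw [h2, circD, Nat.dist_eq_sub_of_le hle]
  · have h2 : (j' + (K - j)) % K = K - (j - j') := by
      rw [Nat.mod_eq_of_lt (by omega)]; omega
    have h3 : Nat.dist j j' = j - j' := by
      rw [Nat.dist_comm, Nat.dist_eq_sub_of_le (le_of_lt hlt)]
    rw [h2, circD, h3]
    have h4 : K - (K - (j - j')) = j - j' := by omega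
    rw [h4, min_comm]

lemma card_ball {K : ℕ} (hK : 0 < K) {j : ℕ} (hj : j < K) (R : ℕ) :
    (ballK K R j).card = ((Finset.range K).filter (fun v => min v (K - v) ≤ R)).card := by
  apply Finset.card_nbij' (i := fun j' => (j' + (K - j)) % K) (j := fun v => (v + j) % K)
  · intro a ha
    rcases Finset.mem_filter.mp ha with ⟨har, hd⟩
    have ha' := Finset.mem_range.mp har
    refine Finset.mem_filter.mpr ⟨Finset.mem_range.mpr (Nat.mod_lt _ hK), ?_⟩
    rw [phi_min hj ha']; exact hd
  · intro v hv
    rcases Finset.mem_filter.mp hv with ⟨hvr, hd⟩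
    have hv' := Finset.mem_range.mp hvr
    refine Finset.mem_filter.mpr ⟨Finset.mem_range.mpr (Nat.mod_lt _ hK), ?_⟩
    rw [← phi_min hj (Nat.mod_lt _ hK : (v + j) % K < K)]
    rw [Nat.mod_add_mod]
    have he : v + j + (K - j) = v + K := by omega
    rw [he, Nat.add_mod_right, Nat.mod_eq_of_lt hv']
    exact hd
  · intro a ha
    rcases Finset.mem_filter.mp ha with ⟨har, _⟩
    have ha' := Finset.mem_range.mp har
    beta_reduce; rw [Nat.mod_add_mod]
    have he : a + (K - j) + j = a + K := by omega
    rw [he, Nat.add_mod_right, Nat.mod_eq_of_lt ha']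
  · intro v hv
    rcases Finset.mem_filter.mp hv with ⟨hvr, _⟩
    have hv' := Finset.mem_range.mp hvr
    beta_reduce; rw [Nat.mod_add_mod]
    have he : v + j + (K - j) = v + K := by omega
    rw [he, Nat.add_mod_right, Nat.mod_eq_of_lt hv']


lemma card_min_le (K R : ℕ) :
    ((Finset.range K).filter (fun v => min v (K - v) ≤ R)).card ≤ 2 * R + 1 := by
  have hsub : (Finset.range K).filter (fun v => min v (K - v) ≤ R) ⊆
      Finset.range (R + 1) ∪ Finset.Ico (K - R) K := by
    intro v hv
    rcases Finset.mem_filter.mp hv with ⟨hvr, hd⟩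
    have hv' := Finset.mem_range.mp hvr
    rw [Finset.mem_union, Finset.mem_range, Finset.mem_Ico]
    rcases min_le_iff.mp hd with h | h
    · left; omega
    · right; omega
  calc ((Finset.range K).filter (fun v => min v (K - v) ≤ R)).card
      ≤ (Finset.range (R + 1) ∪ Finset.Ico (K - R) K).card := Finset.card_le_card hsub
    _ ≤ (Finset.range (R + 1)).card + (Finset.Ico (K - R) K).card := Finset.card_union_le _ _
    _ = (R + 1) + (K - (K - R)) := by rw [Finset.card_range, Nat.card_Ico]
    _ ≤ 2 * R + 1 := by omega

lemma card_min_ge (K R : ℕ) (h : 2 * R + 2 ≤ K) :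
    2 * R + 1 ≤ ((Finset.range K).filter (fun v => min v (K - v) ≤ R)).card := by
  have hsub : Finset.range (R + 1) ∪ Finset.Ico (K - R) K ⊆
      (Finset.range K).filter (fun v => min v (K - v) ≤ R) := by
    intro v hv
    rw [Finset.mem_union, Finset.mem_range, Finset.mem_Ico] at hv
    refine Finset.mem_filter.mpr ⟨Finset.mem_range.mpr (by omega), ?_⟩
    rcases hv with h1 | h1
    · exact le_trans (min_le_left _ _) (by omega)
    · exact le_trans (min_le_right _ _) (by omega)
  have hdisj : Disjoint (Finset.range (R + 1)) (Finset.Ico (K - R) K) := by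
    rw [Finset.disjoint_left]
    intro v hv1 hv2
    rw [Finset.mem_range] at hv1
    rw [Finset.mem_Ico] at hv2
    omega
  have := Finset.card_le_card hsub
  rw [Finset.card_union_of_disjoint hdisj, Finset.card_range, Nat.card_Ico] at this
  omega


lemma PK_disj (K R : ℕ) : ∀ j ∈ Finset.range K, ∀ j' ∈ Finset.range K, j ≠ j' →
    Disjoint ((ballK K R j).image (Prod.mk j)) ((ballK K R j').image (Prod.mk j')) := by
  intro j _ j' _ hne
  rw [Finset.disjoint_left]
  intro p hp hp'
  rcases Finset.mem_image.mp hp with ⟨a, _, rfl⟩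
  rcases Finset.mem_image.mp hp' with ⟨b, _, hb⟩
  exact hne (congrArg Prod.fst hb).symm

lemma card_PK_le {K : ℕ} (hK : 0 < K) (R : ℕ) : (PK K R).card ≤ K * (2 * R + 1) := by
  calc (PK K R).card ≤ ∑ j ∈ Finset.range K, ((ballK K R j).image (Prod.mk j)).card :=
        Finset.card_biUnion_le
    _ ≤ ∑ j ∈ Finset.range K, (2 * R + 1) := by
        apply Finset.sum_le_sum
        intro j hj
        refine le_trans (Finset.card_image_le) ?_
        rw [card_ball hK (Finset.mem_range.mp hj) R]
        exact card_min_le K R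
    _ = K * (2 * R + 1) := by rw [Finset.sum_const, Finset.card_range, smul_eq_mul]

lemma card_PK_ge {K : ℕ} (hK : 0 < K) (R : ℕ) (h : 2 * R + 2 ≤ K) :
    K * (2 * R + 1) ≤ (PK K R).card := by
  rw [PK, Finset.card_biUnion (PK_disj K R)]
  calc K * (2 * R + 1) = ∑ _j ∈ Finset.range K, (2 * R + 1) := by
        rw [Finset.sum_const, Finset.card_range, smul_eq_mul]
    _ ≤ ∑ j ∈ Finset.range K, ((ballK K R j).image (Prod.mk j)).card := by
        apply Finset.sum_le_sum
        intro j hj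
        rw [Finset.card_image_of_injective _ (fun a b hab => (Prod.mk.injEq _ _ _ _).mp hab |>.2)]
        rw [card_ball hK (Finset.mem_range.mp hj) R]
        exact card_min_ge K R h


lemma idx_lt {x : ℕ → ℝ} {K : ℕ} (hK : 0 < K) (n : ℕ) : idxK x K n < K :=
  lt_of_le_of_lt (min_le_right _ _) (by omega)

lemma idx_mem {x : ℕ → ℝ} (hx : ∀ n, x n ∈ Set.Icc (0:ℝ) 1) {K : ℕ} (hK : 0 < K) (n : ℕ) :
    (idxK x K n : ℝ) / K ≤ x n ∧ x n ≤ ((idxK x K n : ℝ) + 1) / K := by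
  have hx0 := (hx n).1
  have hx1 := (hx n).2
  have hKr : (0:ℝ) < K := by exact_mod_cast hK
  constructor
  · have h2 : (idxK x K n : ℝ) ≤ (⌊(K : ℝ) * x n⌋₊ : ℝ) :=
      Nat.cast_le.mpr (min_le_left _ _)
    have h1 : (⌊(K : ℝ) * x n⌋₊ : ℝ) ≤ (K : ℝ) * x n := Nat.floor_le (by positivity)
    rw [div_le_iff₀ hKr]
    nlinarith
  · rw [le_div_iff₀ hKr]
    by_cases hc : ⌊(K : ℝ) * x n⌋₊ ≤ K - 1
    · have he : idxK x K n = ⌊(K : ℝ) * x n⌋₊ := min_eq_left hc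
      have h1 := Nat.lt_floor_add_one ((K : ℝ) * x n)
      rw [he]
      nlinarith
    · have he : idxK x K n = K - 1 := min_eq_right (by omega)
      rw [he]
      have h2 : ((K - 1 : ℕ) : ℝ) = (K : ℝ) - 1 := by
        push_cast [Nat.cast_sub hK]; ring
      rw [h2]
      nlinarith

lemma idx_eq_iff_lt {x : ℕ → ℝ} (hx : ∀ n, x n ∈ Set.Icc (0:ℝ) 1) {K : ℕ} (hK : 0 < K)
    {j : ℕ} (hj : j + 1 < K) (n : ℕ) :
    idxK x K n = j ↔ ((j : ℝ) / K ≤ x n ∧ x n < ((j : ℝ) + 1) / K) := by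
  have hKr : (0:ℝ) < K := by exact_mod_cast hK
  have hx0 := (hx n).1
  constructor
  · intro he
    have hm := idx_mem hx hK n
    rw [he] at hm
    refine ⟨hm.1, ?_⟩
    have hfl : ⌊(K : ℝ) * x n⌋₊ = j := by
      have := min_le_right (⌊(K : ℝ) * x n⌋₊) (K - 1)
      rcases Nat.lt_or_ge (⌊(K : ℝ) * x n⌋₊) (K - 1) with hc | hc
      · rw [idxK, min_eq_left (le_of_lt hc)] at he; exact he
      · rw [idxK, min_eq_right hc] at he; omega
    have h1 := Nat.lt_floor_add_one ((K : ℝ) * x n)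
    rw [hfl] at h1
    rw [lt_div_iff₀ hKr]
    nlinarith
  · rintro ⟨h1, h2⟩
    have hfl : ⌊(K : ℝ) * x n⌋₊ = j := by
      rw [Nat.floor_eq_iff (by positivity)]
      rw [div_le_iff₀ hKr] at h1
      rw [lt_div_iff₀ hKr] at h2
      constructor <;> nlinarith
    rw [idxK, hfl]
    exact min_eq_left (by omega)

lemma idx_eq_iff_last {x : ℕ → ℝ} (hx : ∀ n, x n ∈ Set.Icc (0:ℝ) 1) {K : ℕ} (hK : 0 < K)
    {j : ℕ} (hj : j + 1 = K) (n : ℕ) :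
    idxK x K n = j ↔ (j : ℝ) / K ≤ x n := by
  have hKr : (0:ℝ) < K := by exact_mod_cast hK
  constructor
  · intro he
    have hm := idx_mem hx hK n
    rw [he] at hm
    exact hm.1
  · intro h1
    have hfl : j ≤ ⌊(K : ℝ) * x n⌋₊ := by
      apply Nat.le_floor
      rw [div_le_iff₀ hKr] at h1
      nlinarith
    rw [idxK]
    have : K - 1 = j := by omega
    rw [this]
    exact min_eq_right (by omega)

lemma abs_bounds {K : ℕ} (hK : 0 < K) {j j' : ℕ} {a b : ℝ}
    (ha1 : (j : ℝ) / K ≤ a) (ha2 : a ≤ ((j : ℝ) + 1) / K)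
    (hb1 : (j' : ℝ) / K ≤ b) (hb2 : b ≤ ((j' : ℝ) + 1) / K) :
    ((Nat.dist j j' : ℝ) - 1) / K ≤ |a - b| ∧ |a - b| ≤ ((Nat.dist j j' : ℝ) + 1) / K := by
  have hKr : (0:ℝ) < K := by exact_mod_cast hK
  rcases le_total j j' with hle | hle
  · have hd : (Nat.dist j j' : ℝ) = (j' : ℝ) - j := by
      rw [Nat.dist_eq_sub_of_le hle]; push_cast [Nat.cast_sub hle]; ring
    rw [hd]
    rw [div_le_iff₀ hKr] at ha1 hb1
    rw [le_div_iff₀ hKr] at ha2 hb2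
    constructor
    · rw [div_le_iff₀ hKr]
      calc ((j':ℝ) - j - 1) ≤ (b - a) * K := by nlinarith
        _ ≤ |a - b| * K := by
          have : b - a ≤ |a - b| := by rw [abs_sub_comm]; exact le_abs_self _
          nlinarith
    · rw [le_div_iff₀ hKr]
      rcases abs_cases (a - b) with ⟨he, _⟩ | ⟨he, _⟩ <;> rw [he] <;> nlinarith
  · have hd : (Nat.dist j j' : ℝ) = (j : ℝ) - j' := by
      rw [Nat.dist_comm, Nat.dist_eq_sub_of_le hle]; push_cast [Nat.cast_sub hle]; ring
    rw [hd]
    rw [div_le_iff₀ hKr] at ha1 hb1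
    rw [le_div_iff₀ hKr] at ha2 hb2
    constructor
    · rw [div_le_iff₀ hKr]
      calc ((j:ℝ) - j' - 1) ≤ (a - b) * K := by nlinarith
        _ ≤ |a - b| * K := by nlinarith [le_abs_self (a - b)]
    · rw [le_div_iff₀ hKr]
      rcases abs_cases (a - b) with ⟨he, _⟩ | ⟨he, _⟩ <;> rw [he] <;> nlinarith

lemma keyU {K : ℕ} (hK : 0 < K) {s : ℝ} (hs : 0 < s) {j j' : ℕ}
    (hj : j < K) (hj' : j' < K) {a b : ℝ}
    (ha01 : a ∈ Set.Icc (0:ℝ) 1) (hb01 : b ∈ Set.Icc (0:ℝ) 1)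
    (ha1 : (j : ℝ) / K ≤ a) (ha2 : a ≤ ((j : ℝ) + 1) / K)
    (hb1 : (j' : ℝ) / K ≤ b) (hb2 : b ≤ ((j' : ℝ) + 1) / K)
    (hnd : nd (a - b) ≤ s) : circD K j j' ≤ ⌊s * K⌋₊ + 1 := by
  have hKr : (0:ℝ) < K := by exact_mod_cast hK
  have hab1 : |a - b| ≤ 1 := abs_le.mpr ⟨by linarith [ha01.1, ha01.2, hb01.1, hb01.2],
    by linarith [ha01.1, ha01.2, hb01.1, hb01.2]⟩
  have hmin : min |a - b| (1 - |a - b|) ≤ s := le_trans (min_le_nd hab1) hnd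
  have habs := abs_bounds hK ha1 ha2 hb1 hb2
  have hdK : Nat.dist j j' < K := dist_lt_K hj hj'
  have hfl : ⌊s * K⌋₊ + 1 = ⌊s * K + 1⌋₊ := (Nat.floor_add_one (by positivity)).symm
  rw [hfl]
  apply Nat.le_floor
  rcases min_le_iff.mp hmin with hcase | hcase
  · -- |a - b| ≤ s : circD ≤ dist ≤ sK + 1
    have h1 : ((Nat.dist j j' : ℝ) - 1) / K ≤ s := le_trans habs.1 hcase
    rw [div_le_iff₀ hKr] at h1
    have h2 : (circD K j j' : ℝ) ≤ (Nat.dist j j' : ℝ) :=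
      Nat.cast_le.mpr (min_le_left _ _)
    nlinarith
  · -- 1 - |a-b| ≤ s : circD ≤ K - dist ≤ sK + 1
    have h1 : 1 - ((Nat.dist j j' : ℝ) + 1) / K ≤ s := by
      have := habs.2; linarith
    rw [sub_le_iff_le_add, ← sub_le_iff_le_add'] at h1
    have h2 : (circD K j j' : ℝ) ≤ ((K - Nat.dist j j' : ℕ) : ℝ) :=
      Nat.cast_le.mpr (min_le_right _ _)
    have h3 : ((K - Nat.dist j j' : ℕ) : ℝ) = (K : ℝ) - Nat.dist j j' := by
      push_cast [Nat.cast_sub (le_of_lt hdK)]; ring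
    rw [h3] at h2
    rw [le_div_iff₀ hKr] at h1
    nlinarith

lemma keyL {K : ℕ} (hK : 0 < K) {s : ℝ} (hs : 0 < s) {j j' : ℕ}
    (hj : j < K) (hj' : j' < K) {a b : ℝ}
    (ha01 : a ∈ Set.Icc (0:ℝ) 1) (hb01 : b ∈ Set.Icc (0:ℝ) 1)
    (ha1 : (j : ℝ) / K ≤ a) (ha2 : a ≤ ((j : ℝ) + 1) / K)
    (hb1 : (j' : ℝ) / K ≤ b) (hb2 : b ≤ ((j' : ℝ) + 1) / K)
    (hD : (circD K j j' : ℝ) + 1 ≤ s * K) : nd (a - b) ≤ s := by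
  have hKr : (0:ℝ) < K := by exact_mod_cast hK
  have hab1 : |a - b| ≤ 1 := abs_le.mpr ⟨by linarith [ha01.1, ha01.2, hb01.1, hb01.2],
    by linarith [ha01.1, ha01.2, hb01.1, hb01.2]⟩
  have habs := abs_bounds hK ha1 ha2 hb1 hb2
  have hdK : Nat.dist j j' < K := dist_lt_K hj hj'
  rcases min_cases (Nat.dist j j') (K - Nat.dist j j') with ⟨he, _⟩ | ⟨he, _⟩
  · -- circD = dist
    rw [circD, he] at hD
    have h1 : |a - b| ≤ s := by
      refine le_trans habs.2 ?_
      rw [div_le_iff₀ hKr]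
      nlinarith
    exact le_trans (nd_le_abs _) h1
  · -- circD = K - dist
    rw [circD, he] at hD
    have h3 : ((K - Nat.dist j j' : ℕ) : ℝ) = (K : ℝ) - Nat.dist j j' := by
      push_cast [Nat.cast_sub (le_of_lt hdK)]; ring
    rw [h3] at hD
    have h1 : 1 - |a - b| ≤ s := by
      have h2 := habs.1
      rw [div_le_iff₀ hKr] at h2
      nlinarith
    exact le_trans (nd_le_one_sub_abs hab1) h1


lemma count_upper {x : ℕ → ℝ} (hx : ∀ n, x n ∈ Set.Icc (0:ℝ) 1) {s : ℝ} (hs : 0 < s)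
    {K : ℕ} (hK : 0 < K) (N : ℕ) :
    pairCount x N s ≤
      ∑ q ∈ PK K (⌊s * K⌋₊ + 1), (SK x K q.1 N).card * (SK x K q.2 N).card := by
  have hsub : (Finset.Icc 1 N ×ˢ Finset.Icc 1 N).filter
      (fun p => p.1 ≠ p.2 ∧ nd (x p.1 - x p.2) ≤ s) ⊆
      (PK K (⌊s * K⌋₊ + 1)).biUnion (fun q => SK x K q.1 N ×ˢ SK x K q.2 N) := by
    intro p hp
    rcases Finset.mem_filter.mp hp with ⟨hpm, _, hnd⟩
    rcases Finset.mem_product.mp hpm with ⟨hp1, hp2⟩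
    refine Finset.mem_biUnion.mpr ⟨(idxK x K p.1, idxK x K p.2), ?_, ?_⟩
    · refine mem_PK.mpr ⟨idx_lt hK _, idx_lt hK _, ?_⟩
      exact keyU hK hs (idx_lt hK _) (idx_lt hK _) (hx p.1) (hx p.2)
        (idx_mem hx hK p.1).1 (idx_mem hx hK p.1).2
        (idx_mem hx hK p.2).1 (idx_mem hx hK p.2).2 hnd
    · exact Finset.mem_product.mpr ⟨Finset.mem_filter.mpr ⟨hp1, rfl⟩,
        Finset.mem_filter.mpr ⟨hp2, rfl⟩⟩
  calc pairCount x N s ≤ ((PK K (⌊s * K⌋₊ + 1)).biUnion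
        (fun q => SK x K q.1 N ×ˢ SK x K q.2 N)).card := Finset.card_le_card hsub
    _ ≤ ∑ q ∈ PK K (⌊s * K⌋₊ + 1), (SK x K q.1 N ×ˢ SK x K q.2 N).card :=
        Finset.card_biUnion_le
    _ = ∑ q ∈ PK K (⌊s * K⌋₊ + 1), (SK x K q.1 N).card * (SK x K q.2 N).card := by
        apply Finset.sum_congr rfl; intro q _; exact Finset.card_product _ _

lemma count_lower {x : ℕ → ℝ} (hx : ∀ n, x n ∈ Set.Icc (0:ℝ) 1) {s : ℝ} (hs : 0 < s)
    {K : ℕ} (hK : 0 < K) {R : ℕ} (hR : (R : ℝ) + 1 ≤ s * K) (N : ℕ) :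
    ∑ q ∈ PK K R, (SK x K q.1 N).card * (SK x K q.2 N).card ≤ pairCount x N s + N := by
  have hdisj : ∀ q ∈ PK K R, ∀ q' ∈ PK K R, q ≠ q' →
      Disjoint (SK x K q.1 N ×ˢ SK x K q.2 N) (SK x K q'.1 N ×ˢ SK x K q'.2 N) := by
    intro q _ q' _ hne
    rw [Finset.disjoint_left]
    intro p hp hp'
    rcases Finset.mem_product.mp hp with ⟨h1, h2⟩
    rcases Finset.mem_product.mp hp' with ⟨h1', h2'⟩
    apply hne
    have e1 := (Finset.mem_filter.mp h1).2
    have e2 := (Finset.mem_filter.mp h2).2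
    have e1' := (Finset.mem_filter.mp h1').2
    have e2' := (Finset.mem_filter.mp h2').2
    exact Prod.ext (e1 ▸ e1'.symm ▸ rfl) (e2 ▸ e2'.symm ▸ rfl)
  have hsub : (PK K R).biUnion (fun q => SK x K q.1 N ×ˢ SK x K q.2 N) ⊆
      ((Finset.Icc 1 N ×ˢ Finset.Icc 1 N).filter
        (fun p => p.1 ≠ p.2 ∧ nd (x p.1 - x p.2) ≤ s)) ∪
      ((Finset.Icc 1 N ×ˢ Finset.Icc 1 N).filter (fun p => p.1 = p.2)) := by
    intro p hp
    rcases Finset.mem_biUnion.mp hp with ⟨q, hq, hpq⟩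
    rcases mem_PK.mp hq with ⟨hq1, hq2, hqD⟩
    rcases Finset.mem_product.mp hpq with ⟨h1, h2⟩
    rcases Finset.mem_filter.mp h1 with ⟨h1m, h1e⟩
    rcases Finset.mem_filter.mp h2 with ⟨h2m, h2e⟩
    have hprod : p ∈ Finset.Icc 1 N ×ˢ Finset.Icc 1 N := Finset.mem_product.mpr ⟨h1m, h2m⟩
    have hndp : nd (x p.1 - x p.2) ≤ s := by
      apply keyL hK hs hq1 hq2 (hx p.1) (hx p.2)
      · rw [← h1e]; exact (idx_mem hx hK p.1).1
      · rw [← h1e]; exact (idx_mem hx hK p.1).2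
      · rw [← h2e]; exact (idx_mem hx hK p.2).1
      · rw [← h2e]; exact (idx_mem hx hK p.2).2
      · calc (circD K q.1 q.2 : ℝ) + 1 ≤ (R : ℝ) + 1 := by
              have : (circD K q.1 q.2 : ℝ) ≤ (R : ℝ) := Nat.cast_le.mpr hqD
              linarith
          _ ≤ s * K := hR
    rw [Finset.mem_union]
    by_cases hd : p.1 = p.2
    · right; exact Finset.mem_filter.mpr ⟨hprod, hd⟩
    · left; exact Finset.mem_filter.mpr ⟨hprod, hd, hndp⟩
  have hdiag : ((Finset.Icc 1 N ×ˢ Finset.Icc 1 N).filter (fun p => p.1 = p.2)).card ≤ N := by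
    have : ((Finset.Icc 1 N ×ˢ Finset.Icc 1 N).filter (fun p => p.1 = p.2)).card ≤
        (Finset.Icc 1 N).card := by
      apply Finset.card_le_card_of_injOn Prod.fst
      · intro p hp
        exact (Finset.mem_product.mp (Finset.mem_filter.mp hp).1).1
      · intro p hp p' hp' he
        have e1 := (Finset.mem_filter.mp (Finset.mem_coe.mp hp)).2
        have e2 := (Finset.mem_filter.mp (Finset.mem_coe.mp hp')).2
        exact Prod.ext he (by rw [← e1, ← e2]; exact he)
    simpa [Nat.card_Icc] using this
  calc ∑ q ∈ PK K R, (SK x K q.1 N).card * (SK x K q.2 N).card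
      = ∑ q ∈ PK K R, (SK x K q.1 N ×ˢ SK x K q.2 N).card := by
        apply Finset.sum_congr rfl; intro q _; exact (Finset.card_product _ _).symm
    _ = ((PK K R).biUnion (fun q => SK x K q.1 N ×ˢ SK x K q.2 N)).card :=
        (Finset.card_biUnion hdisj).symm
    _ ≤ _ := Finset.card_le_card hsub
    _ ≤ pairCount x N s + N := by
        refine le_trans (Finset.card_union_le _ _) ?_
        exact Nat.add_le_add le_rfl hdiag


lemma cnt_point (x : ℕ → ℝ) (h : UnifDist x) {b : ℝ} (hb0 : 0 < b) (hb1 : b ≤ 1) :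
    Tendsto (fun N : ℕ => (((Finset.Icc 1 N).filter (fun i => x i = b)).card : ℝ) / N)
      atTop (nhds 0) := by
  rw [Metric.tendsto_atTop]
  intro ε hε
  set a := max 0 (b - ε / 2) with ha
  have ha0 : 0 ≤ a := le_max_left _ _
  have hab : a < b := max_lt hb0 (by linarith)
  have hba : b - a ≤ ε / 2 := by
    have := le_max_right 0 (b - ε / 2); simp only [ha]; linarith [le_max_right 0 (b - ε/2)]
  obtain ⟨N₀, hN₀⟩ := Metric.tendsto_atTop.mp (h a b ha0 hab hb1) (ε / 2) (by linarith)
  refine ⟨N₀, fun n hn => ?_⟩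
  have h1 := hN₀ n hn
  rw [Real.dist_eq, abs_sub_lt_iff] at h1
  have hsub : (Finset.Icc 1 n).filter (fun i => x i = b) ⊆
      (Finset.Icc 1 n).filter (fun i => x i ∈ Set.Icc a b) := by
    apply Finset.monotone_filter_right
    intro i _ hi
    rw [hi]; exact Set.mem_Icc.mpr ⟨le_of_lt hab, le_refl b⟩
  have hcard : (((Finset.Icc 1 n).filter (fun i => x i = b)).card : ℝ) ≤
      (((Finset.Icc 1 n).filter (fun i => x i ∈ Set.Icc a b)).card : ℝ) :=
    Nat.cast_le.mpr (Finset.card_le_card hsub)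
  have hnn : (0:ℝ) ≤ (((Finset.Icc 1 n).filter (fun i => x i = b)).card : ℝ) / n := by
    positivity
  rw [Real.dist_eq, sub_zero, abs_of_nonneg hnn]
  rcases Nat.eq_zero_or_pos n with rfl | hnpos
  · simpa using hε
  · have hnr : (0:ℝ) < n := by exact_mod_cast hnpos
    have h2 : (((Finset.Icc 1 n).filter (fun i => x i = b)).card : ℝ) / n ≤
        (((Finset.Icc 1 n).filter (fun i => x i ∈ Set.Icc a b)).card : ℝ) / n := by
      gcongr
    linarith [h1.1]

lemma SK_tendsto {x : ℕ → ℝ} (hx : ∀ n, x n ∈ Set.Icc (0:ℝ) 1) (h : UnifDist x)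
    {K : ℕ} (hK : 0 < K) {j : ℕ} (hj : j < K) :
    Tendsto (fun N : ℕ => ((SK x K j N).card : ℝ) / N) atTop (nhds (1 / K)) := by
  have hKr : (0:ℝ) < K := by exact_mod_cast hK
  rcases eq_or_lt_of_le (Nat.succ_le_of_lt hj) with hcase | hcase
  · -- j + 1 = K
    have hjr : (j : ℝ) / K < 1 := by
      rw [div_lt_one hKr]; exact_mod_cast hj
    have hlim := h ((j : ℝ) / K) 1 (by positivity) hjr le_rfl
    have heq : ∀ N : ℕ, (SK x K j N).card =
        ((Finset.Icc 1 N).filter (fun i => x i ∈ Set.Icc ((j : ℝ) / K) 1)).card := by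
      intro N
      congr 1
      apply Finset.filter_congr
      intro i _
      rw [idx_eq_iff_last hx hK hcase i]
      simp only [Set.mem_Icc, eq_iff_iff]
      constructor
      · intro h1; exact ⟨h1, (hx i).2⟩
      · intro h1; exact h1.1
    have hval : 1 - (j : ℝ) / K = 1 / K := by
      have : (j : ℝ) = (K : ℝ) - 1 := by
        have : ((j : ℕ) : ℝ) + 1 = K := by exact_mod_cast hcase
        linarith
      rw [this]; field_simp; ring
    rw [← hval]
    apply hlim.congr
    intro N
    rw [heq N]
  · -- j + 1 < K
    have hj1K : ((j : ℝ) + 1) / K ≤ 1 := by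
      rw [div_le_one hKr]; exact_mod_cast hcase.le
    have hlt : (j : ℝ) / K < ((j : ℝ) + 1) / K := by
      apply (div_lt_div_iff_of_pos_right hKr).mpr; linarith
    have hIcc := h ((j : ℝ) / K) (((j : ℝ) + 1) / K) (by positivity) hlt hj1K
    have hpt := cnt_point x h (b := ((j : ℝ) + 1) / K) (by positivity) hj1K
    have key : ∀ N : ℕ,
        ((Finset.Icc 1 N).filter (fun i => x i ∈ Set.Icc ((j : ℝ) / K) (((j : ℝ) + 1) / K))).card
        = (SK x K j N).card + ((Finset.Icc 1 N).filter (fun i => x i = ((j : ℝ) + 1) / K)).card := by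
      intro N
      have hset : (Finset.Icc 1 N).filter (fun i => x i ∈ Set.Icc ((j:ℝ)/K) (((j:ℝ)+1)/K)) =
          SK x K j N ∪ (Finset.Icc 1 N).filter (fun i => x i = ((j:ℝ)+1)/K) := by
        ext i
        simp only [SK, Finset.mem_union, Finset.mem_filter, Set.mem_Icc]
        constructor
        · rintro ⟨him, h1, h2⟩
          by_cases hb : x i = ((j:ℝ)+1)/K
          · exact Or.inr ⟨him, hb⟩
          · exact Or.inl ⟨him, (idx_eq_iff_lt hx hK hcase i).mpr ⟨h1, lt_of_le_of_ne h2 hb⟩⟩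
        · rintro (⟨him, he⟩ | ⟨him, he⟩)
          · rcases (idx_eq_iff_lt hx hK hcase i).mp he with ⟨h1, h2⟩
            exact ⟨him, h1, h2.le⟩
          · exact ⟨him, by rw [he]; exact ⟨hlt.le, le_rfl⟩⟩
      have hdisj : Disjoint (SK x K j N)
          ((Finset.Icc 1 N).filter (fun i => x i = ((j:ℝ)+1)/K)) := by
        rw [Finset.disjoint_left]
        intro i hi1 hi2
        rcases Finset.mem_filter.mp hi1 with ⟨_, he⟩
        rcases Finset.mem_filter.mp hi2 with ⟨_, hb⟩
        rcases (idx_eq_iff_lt hx hK hcase i).mp he with ⟨_, h2⟩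
        rw [hb] at h2
        exact lt_irrefl _ h2
      rw [hset, Finset.card_union_of_disjoint hdisj]
    have hval : ((j : ℝ) + 1) / K - (j : ℝ) / K - 0 = 1 / K := by
      field_simp; ring
    rw [← hval]
    apply (hIcc.sub hpt).congr
    intro N
    rw [key N]
    push_cast
    ring


theorem stmt3 (x : ℕ → ℝ) (hx : ∀ n, x n ∈ Set.Icc (0:ℝ) 1) (h : UnifDist x) :
    ∀ s : ℝ, 0 < s → s ≤ 1/2 →
      Tendsto (fun N : ℕ => (pairCount x N s : ℝ) / (N : ℝ) ^ 2) atTop (nhds (2 * s)) := by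
  intro s hs hs2
  rw [Metric.tendsto_atTop]
  intro ε hε
  set K : ℕ := ⌈2/s⌉₊ + ⌈8/ε⌉₊ + 1 with hKdef
  have hK : 0 < K := by omega
  have hKr : (0:ℝ) < K := by exact_mod_cast hK
  have hs2K : (2:ℝ) ≤ s * K := by
    have h1 : (2/s : ℝ) ≤ ((⌈2/s⌉₊ : ℕ) : ℝ) := Nat.le_ceil _
    have h2 : ((⌈2/s⌉₊ : ℕ) : ℝ) ≤ (K : ℝ) := Nat.cast_le.mpr (by omega)
    have h3 := (div_le_iff₀ hs).mp (le_trans h1 h2)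
    linarith
  have hεK : (8:ℝ) ≤ ε * K := by
    have h1 : (8/ε : ℝ) ≤ ((⌈8/ε⌉₊ : ℕ) : ℝ) := Nat.le_ceil _
    have h2 : ((⌈8/ε⌉₊ : ℕ) : ℝ) ≤ (K : ℝ) := Nat.cast_le.mpr (by omega)
    have h3 := (div_le_iff₀ hε).mp (le_trans h1 h2)
    linarith
  have h1K : (1:ℝ)/K ≤ ε/8 := by
    rw [div_le_div_iff₀ hKr (by norm_num)]
    linarith
  have hsk0 : (0:ℝ) ≤ s * K := by positivity
  set R : ℕ := ⌊s * (K:ℝ)⌋₊ + 1 with hRdef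
  set R' : ℕ := ⌈s * (K:ℝ)⌉₊ - 2 with hR'def
  have hceil2 : 2 ≤ ⌈s * (K:ℝ)⌉₊ := by
    have h1 : (2:ℝ) ≤ ((⌈s * (K:ℝ)⌉₊ : ℕ) : ℝ) := le_trans hs2K (Nat.le_ceil _)
    exact_mod_cast h1
  have hR'cast : (R' : ℝ) = ((⌈s * (K:ℝ)⌉₊ : ℕ) : ℝ) - 2 := by
    rw [hR'def, Nat.cast_sub hceil2]; norm_num
  have hR'low : s * K - 2 ≤ (R' : ℝ) := by
    rw [hR'cast]; linarith [Nat.le_ceil (s * (K:ℝ))]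
  have hR'up : (R' : ℝ) + 1 ≤ s * K := by
    rw [hR'cast]
    have := Nat.ceil_lt_add_one hsk0
    linarith
  have hR'K : 2 * R' + 2 ≤ K := by
    have hc : 2 * (R' : ℝ) + 2 ≤ (K : ℝ) := by nlinarith
    exact_mod_cast hc
  have hRcast : (R : ℝ) ≤ s * K + 1 := by
    have h1 : ((⌊s * (K:ℝ)⌋₊ : ℕ) : ℝ) ≤ s * K := Nat.floor_le hsk0
    rw [hRdef, Nat.cast_add, Nat.cast_one]
    linarith
  -- limits of the two sums
  have hsumlim : ∀ Rc : ℕ, Tendsto (fun N : ℕ =>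
      ∑ q ∈ PK K Rc, ((SK x K q.1 N).card * (SK x K q.2 N).card : ℝ) / (N : ℝ)^2)
      atTop (nhds (∑ _q ∈ PK K Rc, (1/(K:ℝ)) * (1/(K:ℝ)))) := by
    intro Rc
    apply tendsto_finset_sum
    intro q hq
    rcases mem_PK.mp hq with ⟨hq1, hq2, _⟩
    apply ((SK_tendsto hx h hK hq1).mul (SK_tendsto hx h hK hq2)).congr
    intro N
    push_cast
    rw [div_mul_div_comm, ← sq]
  have hsum_eq : ∀ Rc : ℕ, (∑ _q ∈ PK K Rc, (1/(K:ℝ)) * (1/(K:ℝ)))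
      = ((PK K Rc).card : ℝ) * (1/(K:ℝ) * (1/(K:ℝ))) := by
    intro Rc
    rw [Finset.sum_const, nsmul_eq_mul]
  have hUbound : (∑ _q ∈ PK K R, (1/(K:ℝ)) * (1/(K:ℝ))) ≤ 2*s + 3/K := by
    rw [hsum_eq]
    have hc1 : ((PK K R).card : ℝ) ≤ (K : ℝ) * (2 * R + 1) := by
      exact_mod_cast card_PK_le hK R
    have hc2 : ((PK K R).card : ℝ) ≤ (K : ℝ) * (2 * (s*K+1) + 1) := by
      refine le_trans hc1 ?_
      have : 2 * (R:ℝ) + 1 ≤ 2 * (s*K+1) + 1 := by linarith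
      nlinarith
    have hpos : (0:ℝ) ≤ 1/(K:ℝ) * (1/(K:ℝ)) := by positivity
    calc ((PK K R).card : ℝ) * (1/(K:ℝ) * (1/(K:ℝ)))
        ≤ ((K:ℝ) * (2*(s*K+1)+1)) * (1/(K:ℝ) * (1/(K:ℝ))) :=
          mul_le_mul_of_nonneg_right hc2 hpos
      _ = 2*s + 3/K := by field_simp; ring
  have hLbound : 2*s - 3/K ≤ (∑ _q ∈ PK K R', (1/(K:ℝ)) * (1/(K:ℝ))) := by
    rw [hsum_eq]
    have hc1 : (K : ℝ) * (2 * R' + 1) ≤ ((PK K R').card : ℝ) := by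
      exact_mod_cast card_PK_ge hK R' hR'K
    have hc2 : (K : ℝ) * (2 * (s*K-2) + 1) ≤ ((PK K R').card : ℝ) := by
      refine le_trans ?_ hc1
      nlinarith
    have hpos : (0:ℝ) ≤ 1/(K:ℝ) * (1/(K:ℝ)) := by positivity
    calc 2*s - 3/K = ((K:ℝ) * (2*(s*K-2)+1)) * (1/(K:ℝ) * (1/(K:ℝ))) := by
          field_simp; ring
      _ ≤ ((PK K R').card : ℝ) * (1/(K:ℝ) * (1/(K:ℝ))) :=
          mul_le_mul_of_nonneg_right hc2 hpos
  obtain ⟨N₁, hN₁⟩ := Metric.tendsto_atTop.mp (hsumlim R) (ε/4) (by linarith)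
  obtain ⟨N₂, hN₂⟩ := Metric.tendsto_atTop.mp (hsumlim R') (ε/4) (by linarith)
  refine ⟨max (max N₁ N₂) (⌈4/ε⌉₊ + 1), fun n hn => ?_⟩
  have hn1 : n ≥ N₁ := le_trans (le_trans (le_max_left N₁ N₂) (le_max_left _ _)) hn
  have hn2 : n ≥ N₂ := le_trans (le_trans (le_max_right N₁ N₂) (le_max_left _ _)) hn
  have hn3 : n ≥ ⌈4/ε⌉₊ + 1 := le_trans (le_max_right _ _) hn
  have hnpos : 0 < n := by omega
  have hnr : (0:ℝ) < n := by exact_mod_cast hnpos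
  have h1n : 1/(n:ℝ) ≤ ε/4 := by
    have h1 : (4/ε : ℝ) ≤ ((⌈4/ε⌉₊ : ℕ) : ℝ) := Nat.le_ceil _
    have h2 : ((⌈4/ε⌉₊ : ℕ) : ℝ) ≤ (n : ℝ) := Nat.cast_le.mpr (by omega)
    rw [div_le_div_iff₀ hnr (by norm_num)]
    have h3 := (div_le_iff₀ hε).mp (le_trans h1 h2)
    linarith
  have h3K : 3/(K:ℝ) ≤ 3*ε/8 := by
    have he : (3:ℝ)/K = 3 * (1/K) := by ring
    rw [he]; linarith
  -- upper chain
  have hu1 : (pairCount x n s : ℝ) / (n:ℝ)^2 ≤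
      ∑ q ∈ PK K R, ((SK x K q.1 n).card * (SK x K q.2 n).card : ℝ) / (n:ℝ)^2 := by
    rw [← Finset.sum_div]
    apply (div_le_div_iff_of_pos_right (by positivity)).mpr
    have := count_upper hx hs hK n
    rw [← hRdef] at this
    exact_mod_cast this
  have hu2 := hN₁ n hn1
  rw [Real.dist_eq, abs_sub_lt_iff] at hu2
  -- lower chain
  have hl1 : (∑ q ∈ PK K R', ((SK x K q.1 n).card * (SK x K q.2 n).card : ℝ) / (n:ℝ)^2)
      ≤ (pairCount x n s : ℝ) / (n:ℝ)^2 + 1/(n:ℝ) := by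
    rw [← Finset.sum_div]
    have hc := count_lower hx hs hK hR'up n
    have hcr : (∑ q ∈ PK K R', ((SK x K q.1 n).card * (SK x K q.2 n).card : ℝ)) ≤
        (pairCount x n s : ℝ) + (n : ℝ) := by exact_mod_cast hc
    have he : (pairCount x n s : ℝ) / (n:ℝ)^2 + 1/(n:ℝ) =
        ((pairCount x n s : ℝ) + (n:ℝ)) / (n:ℝ)^2 := by
      rw [add_div]
      congr 1
      rw [sq]
      field_simp
    rw [he]
    exact (div_le_div_iff_of_pos_right (by positivity)).mpr hcr
  have hl2 := hN₂ n hn2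
  rw [Real.dist_eq, abs_sub_lt_iff] at hl2
  rw [Real.dist_eq, abs_sub_lt_iff]
  constructor
  · linarith [hu1, hu2.1, hUbound]
  · linarith [hl1, hl2.2, hLbound]
end

section
/- Let (Y_n) be a sequence of i.i.d. random variables uniformly distributed on [0,1]. Then almost surely, lim_{N→∞} N^{−1}·#{n ≤ N : Y_n ≥ 1 − s/N}·#{n ≤ N : Y_n ≤ s/N} = 0 for every s > 0. -/
open Finset Filter MeasureTheory
open scoped Classical
open scoped ENNReal

section Helpers

variable {Ω : Type*} [MeasurableSpace Ω] {μ : Measure Ω} {Y : ℕ → Ω → ℝ}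

noncomputable def aC (Y : ℕ → Ω → ℝ) (s : ℝ) (N : ℕ) (ω : Ω) : ℕ :=
  ((Finset.Icc 1 N).filter (fun n => 1 - s / N ≤ Y n ω)).card

noncomputable def bC (Y : ℕ → Ω → ℝ) (s : ℝ) (N : ℕ) (ω : Ω) : ℕ :=
  ((Finset.Icc 1 N).filter (fun n => Y n ω ≤ s / N)).card

lemma measA {n : ℕ} (hY : Measurable (Y n))
    (hY2 : μ.map (Y n) = volume.restrict (Set.Icc (0:ℝ) 1))
    {c : ℝ} (h0 : 0 ≤ c) (h1 : c ≤ 1) :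
    μ (Y n ⁻¹' Set.Ici (1 - c)) = ENNReal.ofReal c := by
  rw [← Measure.map_apply hY measurableSet_Ici, hY2,
    Measure.restrict_apply measurableSet_Ici]
  have hset : Set.Ici (1 - c) ∩ Set.Icc (0:ℝ) 1 = Set.Icc (1-c) 1 := by
    ext x; simp only [Set.mem_inter_iff, Set.mem_Ici, Set.mem_Icc]
    constructor
    · rintro ⟨h, _, h2⟩; exact ⟨h, h2⟩
    · rintro ⟨h, h2⟩; exact ⟨h, by linarith, h2⟩
  rw [hset, Real.volume_Icc]; congr 1; ring

lemma measB {n : ℕ} (hY : Measurable (Y n))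
    (hY2 : μ.map (Y n) = volume.restrict (Set.Icc (0:ℝ) 1))
    {c : ℝ} (h0 : 0 ≤ c) (h1 : c ≤ 1) :
    μ (Y n ⁻¹' Set.Iic c) = ENNReal.ofReal c := by
  rw [← Measure.map_apply hY measurableSet_Iic, hY2,
    Measure.restrict_apply measurableSet_Iic]
  have hset : Set.Iic c ∩ Set.Icc (0:ℝ) 1 = Set.Icc 0 c := by
    ext x; simp only [Set.mem_inter_iff, Set.mem_Iic, Set.mem_Icc]
    constructor
    · rintro ⟨h, h1', _⟩; exact ⟨h1', h⟩
    · rintro ⟨h1', h⟩; exact ⟨h, h1', by linarith⟩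
  rw [hset, Real.volume_Icc]; congr 1; ring

lemma abCast (Y : ℕ → Ω → ℝ) (s : ℝ) (N : ℕ) (ω : Ω) :
    ((aC Y s N ω * bC Y s N ω : ℕ) : ℝ≥0∞)
      = ∑ p ∈ Finset.Icc 1 N ×ˢ Finset.Icc 1 N,
          Set.indicator ((Y p.1 ⁻¹' Set.Ici (1 - s/N)) ∩ (Y p.2 ⁻¹' Set.Iic (s/N)))
            (fun _ => (1:ℝ≥0∞)) ω := by
  rw [Finset.sum_product]
  rw [aC, bC, Finset.card_filter, Finset.card_filter]
  push_cast
  rw [Finset.sum_mul_sum]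
  refine Finset.sum_congr rfl fun i _ => Finset.sum_congr rfl fun j _ => ?_
  by_cases h1 : 1 - s/(N:ℝ) ≤ Y i ω <;> by_cases h2 : Y j ω ≤ s/(N:ℝ) <;>
    simp [Set.indicator, Set.mem_preimage, Set.mem_Ici, Set.mem_Iic, h1, h2]

lemma meas_ab (hmeas : ∀ n, Measurable (Y n)) (s : ℝ) (N : ℕ) :
    Measurable fun ω => ((aC Y s N ω * bC Y s N ω : ℕ) : ℝ≥0∞) := by
  simp_rw [abCast]
  exact Finset.measurable_sum _ (fun p _ => Measurable.indicator measurable_const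
    (((hmeas p.1) measurableSet_Ici).inter ((hmeas p.2) measurableSet_Iic)))

lemma exp_le (hmeas : ∀ n, Measurable (Y n))
    (hindep : ProbabilityTheory.iIndepFun Y μ)
    (hunif : ∀ n, μ.map (Y n) = volume.restrict (Set.Icc (0:ℝ) 1))
    {s : ℝ} {N : ℕ} (hs : 0 < s) (hN : 2 * s < N) :
    ∫⁻ ω, ((aC Y s N ω * bC Y s N ω : ℕ) : ℝ≥0∞) ∂μ ≤ ENNReal.ofReal (s^2) := by
  have hN0 : (0:ℝ) < N := by linarith
  have hc0 : 0 ≤ s / N := by positivity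
  have hc2 : s / N < 1/2 := by rw [div_lt_iff₀ hN0]; linarith
  have hc1 : s / N ≤ 1 := by linarith
  simp_rw [abCast]
  rw [lintegral_finset_sum _ (fun p _ => Measurable.indicator measurable_const
    (((hmeas p.1) measurableSet_Ici).inter ((hmeas p.2) measurableSet_Iic)))]
  have hterm : ∀ p ∈ Finset.Icc 1 N ×ˢ Finset.Icc 1 N,
      (∫⁻ ω, Set.indicator ((Y p.1 ⁻¹' Set.Ici (1 - s/(N:ℝ))) ∩ (Y p.2 ⁻¹' Set.Iic (s/(N:ℝ))))
        (fun _ => (1:ℝ≥0∞)) ω ∂μ) ≤ ENNReal.ofReal ((s/N)*(s/N)) := by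
    intro p _
    have hms : MeasurableSet ((Y p.1 ⁻¹' Set.Ici (1 - s/(N:ℝ))) ∩ (Y p.2 ⁻¹' Set.Iic (s/(N:ℝ)))) :=
      ((hmeas p.1) measurableSet_Ici).inter ((hmeas p.2) measurableSet_Iic)
    rw [show (fun _ : Ω => (1:ℝ≥0∞)) = (1 : Ω → ℝ≥0∞) from rfl, lintegral_indicator_one hms]
    by_cases hp : p.1 = p.2
    · have : (Y p.1 ⁻¹' Set.Ici (1 - s/(N:ℝ))) ∩ (Y p.2 ⁻¹' Set.Iic (s/(N:ℝ))) = ∅ := by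
        rw [hp, Set.eq_empty_iff_forall_notMem]
        rintro ω ⟨h1, h2⟩
        simp only [Set.mem_preimage, Set.mem_Ici, Set.mem_Iic] at h1 h2
        linarith
      rw [this]; simp
    · have hind := (hindep.indepFun hp)
      rw [ProbabilityTheory.indepFun_iff_measure_inter_preimage_eq_mul] at hind
      rw [hind _ _ measurableSet_Ici measurableSet_Iic,
        measA (hmeas p.1) (hunif p.1) hc0 hc1, measB (hmeas p.2) (hunif p.2) hc0 hc1,
        ← ENNReal.ofReal_mul hc0]
  calc ∑ p ∈ Finset.Icc 1 N ×ˢ Finset.Icc 1 N, _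
      ≤ ∑ _p ∈ Finset.Icc 1 N ×ˢ Finset.Icc 1 N, ENNReal.ofReal ((s/N)*(s/N)) :=
        Finset.sum_le_sum hterm
    _ = ((N*N : ℕ) : ℝ≥0∞) * ENNReal.ofReal ((s/N)*(s/N)) := by
        rw [Finset.sum_const, Finset.card_product, Nat.card_Icc]
        simp [nsmul_eq_mul]
    _ ≤ ENNReal.ofReal (s^2) := by
        rw [← ENNReal.ofReal_natCast, ← ENNReal.ofReal_mul (by positivity)]
        apply ENNReal.ofReal_le_ofReal
        push_cast
        rw [show (N:ℝ)*N*((s/N)*(s/N)) = (s*s)*((N/N)*(N/N)) by ring, div_self (ne_of_gt hN0)]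
        nlinarith

lemma tsum_inv_sq_ne_top : ∑' (k:ℕ), ((((k+1)^2 : ℕ) : ℝ≥0∞))⁻¹ ≠ ⊤ := by
  have hsum : Summable (fun k : ℕ => ((((k+1):ℝ))^2)⁻¹) := by
    have h2 : Summable (fun n : ℕ => 1 / (n:ℝ)^2) := Real.summable_one_div_nat_pow.2 one_lt_two
    have := (summable_nat_add_iff 1).2 h2
    refine this.congr fun k => ?_
    push_cast; rw [one_div]
  have heq : ∀ k : ℕ, ((((k+1)^2 : ℕ) : ℝ≥0∞))⁻¹ = ENNReal.ofReal (((((k+1):ℝ))^2)⁻¹) := by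
    intro k
    rw [ENNReal.ofReal_inv_of_pos (by positivity)]
    congr 1
    rw [← ENNReal.ofReal_natCast]
    congr 1
    push_cast; ring
  simp_rw [heq]
  rw [← ENNReal.ofReal_tsum_of_nonneg (fun k => by positivity) hsum]
  exact ENNReal.ofReal_ne_top

lemma bc (hmeas : ∀ n, Measurable (Y n))
    (hindep : ProbabilityTheory.iIndepFun Y μ)
    (hunif : ∀ n, μ.map (Y n) = volume.restrict (Set.Icc (0:ℝ) 1))
    [IsProbabilityMeasure μ]
    (m j : ℕ) (hm : 1 ≤ m) (hj : 1 ≤ j) :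
    ∀ᵐ ω ∂μ, ∀ᶠ k in atTop,
      j * (aC Y ((4*m : ℕ):ℝ) ((k+2)^2) ω * bC Y ((4*m : ℕ):ℝ) ((k+2)^2) ω) < (k+1)^2 := by
  set E : ℕ → Set Ω := fun k =>
    {ω | (k+1)^2 ≤ j * (aC Y ((4*m : ℕ):ℝ) ((k+2)^2) ω * bC Y ((4*m : ℕ):ℝ) ((k+2)^2) ω)}
    with hE
  set C : ℕ := j * 16 * m^2 + 8*m with hC
  have hbound : ∀ k, μ (E k) ≤ (C : ℝ≥0∞) / (((k+1)^2 : ℕ) : ℝ≥0∞) := by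
    intro k
    have hε0 : (((k+1)^2 : ℕ) : ℝ≥0∞) ≠ 0 := by positivity
    have hεt : (((k+1)^2 : ℕ) : ℝ≥0∞) ≠ ⊤ := ENNReal.natCast_ne_top _
    rw [ENNReal.le_div_iff_mul_le (Or.inl hε0) (Or.inl hεt)]
    by_cases hcase : 8*m < (k+2)^2
    · -- Markov
      have hg : Measurable fun ω =>
          (j : ℝ≥0∞) * ((aC Y ((4*m : ℕ):ℝ) ((k+2)^2) ω * bC Y ((4*m : ℕ):ℝ) ((k+2)^2) ω : ℕ) : ℝ≥0∞) :=
        (meas_ab hmeas _ _).const_mul _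
      have hmk := MeasureTheory.mul_meas_ge_le_lintegral₀ (μ := μ) hg.aemeasurable (((k+1)^2 : ℕ) : ℝ≥0∞)
      have hset : {x | (((k+1)^2 : ℕ) : ℝ≥0∞) ≤ (j : ℝ≥0∞) *
          ((aC Y ((4*m : ℕ):ℝ) ((k+2)^2) x * bC Y ((4*m : ℕ):ℝ) ((k+2)^2) x : ℕ) : ℝ≥0∞)} = E k := by
        ext ω
        simp only [hE, Set.mem_setOf_eq]
        rw [show (j : ℝ≥0∞) * ((aC Y ((4*m : ℕ):ℝ) ((k+2)^2) ω * bC Y ((4*m : ℕ):ℝ) ((k+2)^2) ω : ℕ) : ℝ≥0∞)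
            = ((j * (aC Y ((4*m : ℕ):ℝ) ((k+2)^2) ω * bC Y ((4*m : ℕ):ℝ) ((k+2)^2) ω) : ℕ) : ℝ≥0∞) by push_cast; ring]
        exact_mod_cast Iff.rfl
      rw [hset] at hmk
      have hint : ∫⁻ ω, (j : ℝ≥0∞) *
          ((aC Y ((4*m : ℕ):ℝ) ((k+2)^2) ω * bC Y ((4*m : ℕ):ℝ) ((k+2)^2) ω : ℕ) : ℝ≥0∞) ∂μ
          ≤ (C : ℝ≥0∞) := by
        rw [lintegral_const_mul' _ _ (ENNReal.natCast_ne_top j)]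
        have hs4 : (0:ℝ) < ((4*m : ℕ):ℝ) := by
          have : 0 < 4*m := by omega
          exact_mod_cast this
        have hN4 : 2 * ((4*m : ℕ):ℝ) < (((k+2)^2 : ℕ):ℝ) := by
          have hR : ((8*m : ℕ) : ℝ) < (((k+2)^2 : ℕ) : ℝ) := by exact_mod_cast hcase
          push_cast at hR ⊢
          linarith
        have := exp_le hmeas hindep hunif hs4 hN4
        calc (j : ℝ≥0∞) * ∫⁻ ω, ((aC Y ((4*m : ℕ):ℝ) ((k+2)^2) ω * bC Y ((4*m : ℕ):ℝ) ((k+2)^2) ω : ℕ) : ℝ≥0∞) ∂μ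
            ≤ (j : ℝ≥0∞) * ENNReal.ofReal (((4*m : ℕ):ℝ)^2) := by
              exact mul_le_mul_right this _
          _ = ((j * (16 * m^2) : ℕ) : ℝ≥0∞) := by
              rw [show (((4*m : ℕ):ℝ)^2) = (((16 * m^2 : ℕ)):ℝ) by push_cast; ring,
                ENNReal.ofReal_natCast]
              push_cast; ring
          _ ≤ (C : ℝ≥0∞) := by
              have h' : j * (16 * m^2) ≤ C := by
                rw [hC, show j * (16 * m^2) = j * 16 * m^2 from by ring]
                exact Nat.le_add_right _ _
              exact_mod_cast h'
      calc μ (E k) * (((k+1)^2 : ℕ) : ℝ≥0∞) = (((k+1)^2 : ℕ) : ℝ≥0∞) * μ (E k) := mul_comm _ _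
        _ ≤ _ := hmk
        _ ≤ (C : ℝ≥0∞) := hint
    · -- small k : trivial bound
      push_neg at hcase
      have h1 : μ (E k) ≤ 1 := prob_le_one
      calc μ (E k) * (((k+1)^2 : ℕ) : ℝ≥0∞) ≤ 1 * (((k+1)^2 : ℕ) : ℝ≥0∞) :=
            mul_le_mul_left h1 _
        _ ≤ (C : ℝ≥0∞) := by
            rw [one_mul]
            have h12 : (k+1)^2 ≤ (k+2)^2 := Nat.pow_le_pow_left (by omega) 2
            have : (k+1)^2 ≤ C := by
              have hjm : 8*m ≤ C := by
                have : 0 ≤ j * 16 * m^2 := Nat.zero_le _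
                omega
              omega
            exact_mod_cast this
  have htsum : ∑' k, μ (E k) ≠ ⊤ := by
    refine ne_top_of_le_ne_top ?_ (ENNReal.tsum_le_tsum hbound)
    have : ∑' (k:ℕ), (C : ℝ≥0∞) / (((k+1)^2 : ℕ) : ℝ≥0∞)
        = (C : ℝ≥0∞) * ∑' (k:ℕ), ((((k+1)^2 : ℕ) : ℝ≥0∞))⁻¹ := by
      simp_rw [div_eq_mul_inv]
      exact ENNReal.tsum_mul_left
    rw [this]
    exact ENNReal.mul_ne_top (ENNReal.natCast_ne_top _) tsum_inv_sq_ne_top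
  filter_upwards [MeasureTheory.ae_eventually_notMem htsum] with ω hω
  filter_upwards [hω] with k hk
  simpa [hE, Set.mem_setOf_eq, not_le] using hk

lemma aC_interp (Y : ℕ → Ω → ℝ) (ω : Ω) (m N K : ℕ) (hK : 1 ≤ K)
    (h1 : K^2 ≤ N) (h2 : N ≤ (K+1)^2) :
    aC Y (m:ℝ) N ω ≤ aC Y ((4*m : ℕ):ℝ) ((K+1)^2) ω := by
  apply Finset.card_le_card
  intro n hn
  simp only [Finset.mem_filter, Finset.mem_Icc] at hn ⊢
  obtain ⟨⟨hn1, hn2⟩, hy⟩ := hn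
  have hK' : (1:ℝ) ≤ K := by exact_mod_cast hK
  have h1' : ((K:ℝ))^2 ≤ N := by exact_mod_cast h1
  have hN0 : (0:ℝ) < N := by nlinarith
  refine ⟨⟨hn1, hn2.trans h2⟩, ?_⟩
  have key : (m:ℝ)/N ≤ ((4*m : ℕ):ℝ)/((((K+1)^2 : ℕ)):ℝ) := by
    rw [div_le_div_iff₀ hN0 (by positivity)]
    push_cast
    have h4 : ((K:ℝ)+1)^2 ≤ 4*(K:ℝ)^2 := by nlinarith [sq_nonneg ((K:ℝ)-1), hK']
    nlinarith [Nat.cast_nonneg (α := ℝ) m, h4, h1']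
  linarith

lemma bC_interp (Y : ℕ → Ω → ℝ) (ω : Ω) (m N K : ℕ) (hK : 1 ≤ K)
    (h1 : K^2 ≤ N) (h2 : N ≤ (K+1)^2) :
    bC Y (m:ℝ) N ω ≤ bC Y ((4*m : ℕ):ℝ) ((K+1)^2) ω := by
  apply Finset.card_le_card
  intro n hn
  simp only [Finset.mem_filter, Finset.mem_Icc] at hn ⊢
  obtain ⟨⟨hn1, hn2⟩, hy⟩ := hn
  have hK' : (1:ℝ) ≤ K := by exact_mod_cast hK
  have h1' : ((K:ℝ))^2 ≤ N := by exact_mod_cast h1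
  have hN0 : (0:ℝ) < N := by nlinarith
  refine ⟨⟨hn1, hn2.trans h2⟩, ?_⟩
  have key : (m:ℝ)/N ≤ ((4*m : ℕ):ℝ)/((((K+1)^2 : ℕ)):ℝ) := by
    rw [div_le_div_iff₀ hN0 (by positivity)]
    push_cast
    have h4 : ((K:ℝ)+1)^2 ≤ 4*(K:ℝ)^2 := by nlinarith [sq_nonneg ((K:ℝ)-1), hK']
    nlinarith [Nat.cast_nonneg (α := ℝ) m, h4, h1']
  linarith

lemma aC_mono_s (Y : ℕ → Ω → ℝ) (ω : Ω) {s t : ℝ} (hst : s ≤ t) (N : ℕ) :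
    aC Y s N ω ≤ aC Y t N ω := by
  rcases Nat.eq_zero_or_pos N with h | h
  · subst h; simp [aC]
  apply Finset.card_le_card
  intro n hn
  simp only [Finset.mem_filter] at hn ⊢
  have hN0 : (0:ℝ) < N := by exact_mod_cast h
  have : s / N ≤ t / N := div_le_div_of_nonneg_right hst hN0.le
  exact ⟨hn.1, by linarith [hn.2]⟩

lemma bC_mono_s (Y : ℕ → Ω → ℝ) (ω : Ω) {s t : ℝ} (hst : s ≤ t) (N : ℕ) :
    bC Y s N ω ≤ bC Y t N ω := by
  rcases Nat.eq_zero_or_pos N with h | h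
  · subst h; simp [bC]
  apply Finset.card_le_card
  intro n hn
  simp only [Finset.mem_filter] at hn ⊢
  have hN0 : (0:ℝ) < N := by exact_mod_cast h
  have : s / N ≤ t / N := div_le_div_of_nonneg_right hst hN0.le
  exact ⟨hn.1, by linarith [hn.2]⟩


end Helpers

theorem stmt10 {Ω : Type*} [MeasurableSpace Ω] (μ : Measure Ω)
    [IsProbabilityMeasure μ] (Y : ℕ → Ω → ℝ)
    (hmeas : ∀ n, Measurable (Y n))
    (hindep : ProbabilityTheory.iIndepFun Y μ)
    (hunif : ∀ n, μ.map (Y n) = volume.restrict (Set.Icc (0:ℝ) 1)) :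
    ∀ᵐ ω ∂μ, ∀ s : ℝ, 0 < s →
      Tendsto (fun N : ℕ =>
        ((((Finset.Icc 1 N).filter (fun n => 1 - s / N ≤ Y n ω)).card : ℝ) *
          (((Finset.Icc 1 N).filter (fun n => Y n ω ≤ s / N)).card : ℝ)) / N)
        atTop (nhds 0) := by
  have key : ∀ᵐ ω ∂μ, ∀ (m j : ℕ), 1 ≤ m → 1 ≤ j → ∀ᶠ k in atTop,
      j * (aC Y ((4*m : ℕ):ℝ) ((k+2)^2) ω * bC Y ((4*m : ℕ):ℝ) ((k+2)^2) ω) < (k+1)^2 := by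
    rw [MeasureTheory.ae_all_iff]
    intro m
    rw [MeasureTheory.ae_all_iff]
    intro j
    by_cases hm : 1 ≤ m
    · by_cases hj : 1 ≤ j
      · exact (bc hmeas hindep hunif m j hm hj).mono fun ω h _ _ => h
      · exact MeasureTheory.ae_of_all _ fun ω _ hj' => absurd hj' hj
    · exact MeasureTheory.ae_of_all _ fun ω hm' _ => absurd hm' hm
  filter_upwards [key] with ω hω
  intro s hs
  rw [Metric.tendsto_atTop]
  intro ε hε
  obtain ⟨j0, hj0⟩ := exists_nat_one_div_lt hε
  set m := ⌈s⌉₊ with hmdef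
  have hm1 : 1 ≤ m := Nat.ceil_pos.2 hs
  have hev := hω m (j0+1) hm1 (Nat.le_add_left 1 j0)
  obtain ⟨k₀, hk₀⟩ := eventually_atTop.1 hev
  refine ⟨(k₀+2)^2, fun N hN => ?_⟩
  set K := Nat.sqrt N with hKdef
  have hK1 : K^2 ≤ N := Nat.sqrt_le' N
  have hK2 : N < (K+1)^2 := Nat.lt_succ_sqrt' N
  have hKk : k₀ + 2 ≤ K := Nat.le_sqrt'.2 hN
  have hkk1 : (K - 1) + 1 = K := by omega
  have hkk2 : (K - 1) + 2 = K + 1 := by omega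
  have hbig := hk₀ (K - 1) (by omega)
  rw [hkk1, hkk2] at hbig
  have hKge1 : 1 ≤ K := by omega
  have hstep : (j0+1) * (aC Y s N ω * bC Y s N ω) < N := by
    have ha1 : aC Y s N ω ≤ aC Y (m:ℝ) N ω := aC_mono_s Y ω (Nat.le_ceil s) N
    have hb1 : bC Y s N ω ≤ bC Y (m:ℝ) N ω := bC_mono_s Y ω (Nat.le_ceil s) N
    have ha2 := aC_interp Y ω m N K hKge1 hK1 (le_of_lt hK2)
    have hb2 := bC_interp Y ω m N K hKge1 hK1 (le_of_lt hK2)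
    calc (j0+1) * (aC Y s N ω * bC Y s N ω)
        ≤ (j0+1) * (aC Y ((4*m : ℕ):ℝ) ((K+1)^2) ω * bC Y ((4*m : ℕ):ℝ) ((K+1)^2) ω) :=
          Nat.mul_le_mul_left _ (Nat.mul_le_mul (ha1.trans ha2) (hb1.trans hb2))
      _ < K^2 := hbig
      _ ≤ N := hK1
  have hNpos : 0 < N := by omega
  have hN0 : (0:ℝ) < N := by exact_mod_cast hNpos
  rw [Real.dist_eq, sub_zero, abs_of_nonneg (by positivity)]
  have hcast : ((j0:ℝ)+1) * ((aC Y s N ω : ℝ) * (bC Y s N ω : ℝ)) < (N:ℝ) := by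
    exact_mod_cast hstep
  have hfin : ((aC Y s N ω : ℝ) * (bC Y s N ω : ℝ)) / N < 1/((j0:ℝ)+1) := by
    rw [div_lt_div_iff₀ hN0 (by positivity)]
    nlinarith [hcast]
  exact lt_trans hfin hj0
end

section
/- Let (y_n) be a sequence in [0,1] with distinct terms, 0 < β < 1, and define A_N = N·⌊N^{1/β−1}⌋. Define (x_n) by the block construction: each N ∈ (A_M, A_{M+1}] is written uniquely as N = A_M + ε_N·⌊M^{1/β−1}⌋ + q_N(M+1) + r_N with ε_N ∈ {0,1}, 1 ≤ r_N ≤ M+1, and x_N = y_{M+1} if ε_N = 0, x_N = y_{r_N} otherwise. Then for every M ≥ 1 and every k ∈ {1,...,M}: #{1 ≤ n ≤ A_M : x_n = y_k} = ⌊M^{1/β−1}⌋. -/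
open Finset Filter MeasureTheory
open scoped Classical

theorem stmt12 (β : ℝ) (hβ0 : 0 < β) (hβ1 : β < 1)
    (y : ℕ → ℝ) (hy : Function.Injective y)
    (A : ℕ → ℕ) (hA : ∀ N, A N = N * ⌊(N : ℝ) ^ (1/β - 1)⌋₊)
    (x : ℕ → ℝ) (hx1 : x 1 = y 1)
    (hx : ∀ M N ε q r : ℕ, 1 ≤ M → A M < N → N ≤ A (M+1) →
      ε ≤ 1 → 1 ≤ r → r ≤ M + 1 →
      N = A M + ε * ⌊(M : ℝ) ^ (1/β - 1)⌋₊ + q * (M+1) + r →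
      (ε = 0 ↔ N ≤ A M + ⌊(M : ℝ) ^ (1/β - 1)⌋₊) →
      x N = if ε = 0 then y (M+1) else y r) :
    ∀ M k : ℕ, 1 ≤ M → 1 ≤ k → k ≤ M →
      ((Finset.Icc 1 (A M)).filter (fun n => x n = y k)).card
        = ⌊(M : ℝ) ^ (1/β - 1)⌋₊ := by
  have hexp : (0:ℝ) < 1/β - 1 := by
    have h : 1 < 1/β := by rw [lt_div_iff₀ hβ0]; linarith
    linarith
  set c : ℕ → ℕ := fun M => ⌊(M : ℝ) ^ (1/β - 1)⌋₊ with hcdef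
  have hc1 : ∀ M : ℕ, 1 ≤ M → 1 ≤ c M := by
    intro M hM
    have h1 : (1:ℝ) ≤ (M:ℝ) ^ (1/β - 1) :=
      Real.one_le_rpow (by exact_mod_cast hM) hexp.le
    have := Nat.le_floor (α := ℝ) (n := 1) (by exact_mod_cast h1)
    simpa [hcdef] using this
  have hcmono : ∀ M : ℕ, c M ≤ c (M+1) := by
    intro M
    apply Nat.floor_le_floor
    exact Real.rpow_le_rpow (Nat.cast_nonneg M) (by exact_mod_cast Nat.le_succ M) hexp.le
  have hAcM : ∀ M : ℕ, A M + c M ≤ A (M+1) := by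
    intro M
    rw [hA, hA]
    calc M * c M + c M = (M+1) * c M := by ring
    _ ≤ (M+1) * c (M+1) := Nat.mul_le_mul_left (M+1) (hcmono M)
  -- values on the first part of each block
  have xval1 : ∀ M N : ℕ, 1 ≤ M → A M < N → N ≤ A M + c M → x N = y (M+1) := by
    intro M N hM h1 h2
    have key : (N - A M - 1) / (M+1) * (M+1) + (N - A M - 1) % (M+1) = N - A M - 1 := by
      rw [mul_comm]; exact Nat.div_add_mod _ _
    have hmod : (N - A M - 1) % (M+1) < M + 1 := Nat.mod_lt _ (by omega)
    have hN : N = A M + 0 * c M + (N - A M - 1) / (M+1) * (M+1)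
        + ((N - A M - 1) % (M+1) + 1) := by omega
    have := hx M N 0 ((N - A M - 1) / (M+1)) ((N - A M - 1) % (M+1) + 1) hM h1
      (le_trans h2 (hAcM M)) (by norm_num) (by omega) (by omega) hN
      (⟨fun _ => h2, fun _ => rfl⟩)
    simpa using this
  -- values on the second part of each block
  have xval2 : ∀ M q r : ℕ, 1 ≤ M → 1 ≤ r → r ≤ M+1 →
      A M + c M + q*(M+1) + r ≤ A (M+1) → x (A M + c M + q*(M+1) + r) = y r := by
    intro M q r hM hr1 hr2 hle
    have h1 : A M < A M + c M + q*(M+1) + r := by omega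
    have hN : A M + c M + q*(M+1) + r = A M + 1 * c M + q * (M+1) + r := by omega
    have hiff : (1 = 0 ↔ A M + c M + q*(M+1) + r ≤ A M + c M) := by
      constructor
      · intro h; exact absurd h one_ne_zero
      · intro h; omega
    have := hx M (A M + c M + q*(M+1) + r) 1 q r hM h1 hle le_rfl hr1 hr2 hN hiff
    simpa using this
  -- strengthened induction
  suffices H : ∀ M : ℕ, 1 ≤ M →
      (∀ n : ℕ, 1 ≤ n → n ≤ A M → ∃ j : ℕ, 1 ≤ j ∧ j ≤ M ∧ x n = y j) ∧
      (∀ k : ℕ, 1 ≤ k → k ≤ M →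
        ((Finset.Icc 1 (A M)).filter (fun n => x n = y k)).card = c M) by
    intro M k hM hk1 hk2
    exact (H M hM).2 k hk1 hk2
  intro M hM
  induction M, hM using Nat.le_induction with
  | base =>
    have hA1 : A 1 = 1 := by
      rw [hA]
      have : ((1:ℕ):ℝ) ^ (1/β - 1) = 1 := by norm_num [Real.one_rpow]
      rw [this]
      norm_num
    constructor
    · intro n h1 h2
      rw [hA1] at h2
      have hn : n = 1 := le_antisymm h2 h1
      exact ⟨1, le_rfl, le_rfl, by rw [hn, hx1]⟩
    · intro k hk1 hk2
      have hk : k = 1 := le_antisymm hk2 hk1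
      subst hk
      rw [hA1]
      have hcval : c 1 = 1 := by
        have : ((1:ℕ):ℝ) ^ (1/β - 1) = 1 := by norm_num [Real.one_rpow]
        simp [hcdef, this]
      rw [hcval]
      rw [show Finset.Icc 1 1 = {1} by rfl]
      rw [Finset.filter_singleton]
      simp [hx1]
  | succ M hM ih =>
    have hle : c M ≤ c (M+1) := hcmono M
    have hA1pos : 1 ≤ A M := by
      have h := Nat.mul_le_mul hM (hc1 M hM)
      rw [hA]; show 1 ≤ M * c M; omega
    have hmul : c M * (M+1) ≤ c (M+1) * (M+1) := Nat.mul_le_mul_right (M+1) hle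
    have hsplitA : A (M+1) = A M + c M + (c (M+1) - c M) * (M+1) := by
      have h1 : (c (M+1) - c M) * (M+1) = c (M+1) * (M+1) - c M * (M+1) := Nat.sub_mul _ _ _
      have h2 : A (M+1) = c (M+1) * (M+1) := by rw [hA]; exact Nat.mul_comm _ _
      have h3 : A M + c M = c M * (M+1) := by
        rw [hA]; show M * c M + c M = c M * (M+1); ring
      omega
    set B := A M + c M with hB
    set D := c (M+1) - c M with hD
    have hBle : B ≤ A (M+1) := hAcM M
    -- decomposition of elements of the second part
    have decomp : ∀ n : ℕ, B < n → n ≤ A (M+1) →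
        ∃ q r : ℕ, 1 ≤ r ∧ r ≤ M+1 ∧ n = B + q*(M+1) + r := by
      intro n h1 h2
      refine ⟨(n - B - 1) / (M+1), (n - B - 1) % (M+1) + 1, by omega, ?_, ?_⟩
      · have := Nat.mod_lt (n - B - 1) (y := M+1) (by omega)
        omega
      · have key : (n - B - 1) / (M+1) * (M+1) + (n - B - 1) % (M+1) = n - B - 1 := by
          rw [mul_comm]; exact Nat.div_add_mod _ _
        omega
    -- count in the third piece
    have count3 : ∀ k : ℕ, 1 ≤ k → k ≤ M+1 →
        ((Finset.Ioc B (A (M+1))).filter (fun n => x n = y k)).card = D := by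
      intro k hk1 hk2
      have himg : (Finset.Ioc B (A (M+1))).filter (fun n => x n = y k)
          = Finset.image (fun q => B + q*(M+1) + k) (Finset.range D) := by
        ext n
        simp only [Finset.mem_filter, Finset.mem_Ioc, Finset.mem_image, Finset.mem_range]
        constructor
        · rintro ⟨⟨h1, h2⟩, hxn⟩
          obtain ⟨q, r, hr1, hr2, hn⟩ := decomp n h1 h2
          have hxr : x n = y r := by rw [hn]; exact xval2 M q r hM hr1 hr2 (hn ▸ h2)
          have hrk : r = k := hy (by rw [← hxr, hxn])
          subst hrk
          refine ⟨q, ?_, by omega⟩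
          have hn' : B + q*(M+1) + r ≤ B + D*(M+1) := by
            rw [← hn]; rw [hsplitA] at h2; exact h2
          have : q * (M+1) < D * (M+1) := by omega
          exact Nat.lt_of_mul_lt_mul_right this
        · rintro ⟨q, hq, rfl⟩
          have hub : B + q*(M+1) + k ≤ A (M+1) := by
            rw [hsplitA]
            have h1 : (q+1) * (M+1) ≤ D * (M+1) := Nat.mul_le_mul_right (M+1) (by omega)
            have h2 : q*(M+1) + (M+1) = (q+1)*(M+1) := by ring
            omega
          exact ⟨⟨by omega, hub⟩, xval2 M q k hM hk1 hk2 hub⟩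
      rw [himg, Finset.card_image_of_injective _ ?_, Finset.card_range]
      intro a b hab
      simp only at hab
      have : a * (M+1) = b * (M+1) := by omega
      exact Nat.eq_of_mul_eq_mul_right (by omega) this
    -- count in the second piece: all values are y (M+1)
    have val2 : ∀ n ∈ Finset.Ioc (A M) B, x n = y (M+1) := by
      intro n hn
      rw [Finset.mem_Ioc] at hn
      exact xval1 M n hM hn.1 hn.2
    -- splitting the index set
    have hsplit : Finset.Icc 1 (A (M+1))
        = Finset.Icc 1 (A M) ∪ Finset.Ioc (A M) B ∪ Finset.Ioc B (A (M+1)) := by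
      ext n
      simp only [Finset.mem_Icc, Finset.mem_Ioc, Finset.mem_union]
      omega
    have hd1 : Disjoint (Finset.Icc 1 (A M)) (Finset.Ioc (A M) B) := by
      rw [Finset.disjoint_left]; intro a ha hb
      rw [Finset.mem_Icc] at ha; rw [Finset.mem_Ioc] at hb; omega
    have hd2 : Disjoint (Finset.Icc 1 (A M) ∪ Finset.Ioc (A M) B) (Finset.Ioc B (A (M+1))) := by
      rw [Finset.disjoint_left]; intro a ha hb
      rw [Finset.mem_union, Finset.mem_Icc, Finset.mem_Ioc] at ha
      rw [Finset.mem_Ioc] at hb; omega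
    have cardsplit : ∀ p : ℕ → Prop, [DecidablePred p] →
        ((Finset.Icc 1 (A (M+1))).filter p).card
        = ((Finset.Icc 1 (A M)).filter p).card + ((Finset.Ioc (A M) B).filter p).card
          + ((Finset.Ioc B (A (M+1))).filter p).card := by
      intro p hp
      have hd2' : Disjoint ((Finset.Icc 1 (A M)).filter p ∪ (Finset.Ioc (A M) B).filter p)
          ((Finset.Ioc B (A (M+1))).filter p) := by
        rw [← Finset.filter_union]; exact Finset.disjoint_filter_filter hd2
      rw [hsplit, Finset.filter_union, Finset.filter_union,
        Finset.card_union_of_disjoint hd2',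
        Finset.card_union_of_disjoint (Finset.disjoint_filter_filter hd1)]
    constructor
    · -- membership
      intro n h1 h2
      rcases le_or_gt n (A M) with h | h
      · obtain ⟨j, hj1, hj2, hj3⟩ := ih.1 n h1 h
        exact ⟨j, hj1, by omega, hj3⟩
      rcases le_or_gt n B with h' | h'
      · exact ⟨M+1, by omega, le_rfl, xval1 M n hM h h'⟩
      · obtain ⟨q, r, hr1, hr2, hn⟩ := decomp n h' h2
        exact ⟨r, hr1, hr2, by rw [hn]; exact xval2 M q r hM hr1 hr2 (hn ▸ h2)⟩
    · -- counting
      intro k hk1 hk2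
      rw [cardsplit (fun n => x n = y k), count3 k hk1 hk2]
      rcases Nat.lt_or_ge k (M+1) with hkM | hkM
      · -- k ≤ M
        have hc2 : ((Finset.Ioc (A M) B).filter (fun n => x n = y k)).card = 0 := by
          rw [Finset.card_eq_zero, Finset.filter_false_of_mem]
          intro n hn hxn
          have := hy (by rw [← val2 n hn, hxn] : y k = y (M+1))
          omega
        rw [ih.2 k hk1 (by omega), hc2]
        omega
      · -- k = M+1
        have hk : k = M+1 := by omega
        subst hk
        have hc1' : ((Finset.Icc 1 (A M)).filter (fun n => x n = y (M+1))).card = 0 := by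
          rw [Finset.card_eq_zero, Finset.filter_false_of_mem]
          intro n hn hxn
          rw [Finset.mem_Icc] at hn
          obtain ⟨j, hj1, hj2, hj3⟩ := ih.1 n hn.1 hn.2
          have := hy (by rw [← hj3, hxn] : y (M+1) = y j)
          omega
        have hc2 : ((Finset.Ioc (A M) B).filter (fun n => x n = y (M+1))).card = c M := by
          rw [Finset.filter_true_of_mem val2, Nat.card_Ioc]
          omega
        rw [hc1', hc2]
        omega
end
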